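/- arXiv:2106.03681 — 2 statements merged into one kernel-verified Lean document; each statement's English description precedes it below -/
import Mathlib

section
/- Let (E,F) be a uniformly self-similar ends space. Then there exists an involution τ ∈ Homeo(E,F) whose normal closure is all of Homeo(E,F); that is, Homeo(E,F) is normally generated by a single involution. -/
section EndsSpace

variable {E : Type*} [TopologicalSpace E]

/-- A homeomorphism of pairs from `(A, A ∩ F)` to `(B, B ∩ F)`:
a homeomorphism of the subspaces `A → B` carrying `A ∩ F` onto `B ∩ F`. -/
def PairHomeo (F A B : Set E) : Prop :=
  ∃ h : A ≃ₜ B, ∀ x : A, ((h x : E) ∈ F ↔ (x : E) ∈ F)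

/-- `(E, F)` is self-similar: every partition of `E` into finitely many pairwise
disjoint nonempty clopen sets has a piece containing a clopen set `D` with
`(D, D ∩ F)` homeomorphic (as a pair) to `(E, F)`. -/
def SelfSimilarPair (F : Set E) : Prop :=
  ∀ (n : ℕ) (P : Fin n → Set E),
    (∀ i, IsClopen (P i)) → (∀ i, (P i).Nonempty) →
    Pairwise (Function.onFun Disjoint P) → (⋃ i, P i) = Set.univ →
    ∃ i, ∃ D : Set E, IsClopen D ∧ D ⊆ P i ∧ PairHomeo F D Set.univ

/-- The preorder `x ≼ y` on ends: every clopen neighborhood `U` of `y` contains a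
clopen set `D` for which there are a clopen neighborhood `V` of `x` and a
homeomorphism of pairs `(V, V ∩ F) → (D, D ∩ F)`. -/
def EndsLE (F : Set E) (x y : E) : Prop :=
  ∀ U : Set E, IsClopen U → y ∈ U →
    ∃ D : Set E, D ⊆ U ∧ IsClopen D ∧
      ∃ V : Set E, IsClopen V ∧ x ∈ V ∧ PairHomeo F V D

/-- The equivalence `x ∼ y`: `x ≼ y` and `y ≼ x`. -/
def EndsEquiv (F : Set E) (x y : E) : Prop := EndsLE F x y ∧ EndsLE F y x

/-- `x` is a maximal end. -/
def MaximalEnd (F : Set E) (x : E) : Prop := ∀ y, EndsLE F x y → EndsLE F y x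

/-- `M(E)`, the set of maximal ends. -/
def MaxSet (F : Set E) : Set E := {x | MaximalEnd F x}

/-- `(E, F)` is uniformly self-similar: it is self-similar, `M(E)` is a single
`∼`-equivalence class, and `M(E)` is homeomorphic to the Cantor space `ℕ → Bool`. -/
def UniformlySelfSimilar (F : Set E) : Prop :=
  SelfSimilarPair F ∧
  (∃ x, MaxSet F = {y | EndsEquiv F x y}) ∧
  Nonempty (↥(MaxSet F) ≃ₜ (ℕ → Bool))

/-- The group `Homeo(E,F)` of homeomorphisms of `E` preserving `F`,
as a subgroup of the permutation group of `E`. -/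
def EndsHomeo (F : Set E) : Subgroup (Equiv.Perm E) where
  carrier := {h | Continuous h ∧ Continuous h.symm ∧ ∀ x, h x ∈ F ↔ x ∈ F}
  one_mem' := ⟨continuous_id, continuous_id, fun _ => Iff.rfl⟩
  mul_mem' := by
    rintro a b ⟨ha1, ha2, ha3⟩ ⟨hb1, hb2, hb3⟩
    refine ⟨?_, ?_, fun x => ?_⟩
    · exact ha1.comp hb1
    · exact hb2.comp ha2
    · exact (ha3 (b x)).trans (hb3 x)
  inv_mem' := by
    rintro a ⟨ha1, ha2, ha3⟩
    refine ⟨ha2, ha1, fun x => ?_⟩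
    have h := ha3 (a⁻¹ x)
    rw [Equiv.Perm.coe_inv, Equiv.apply_symm_apply] at h
    exact h.symm

/-- A half-space of `(E,F)`: a clopen set meeting `M(E)` in a nonempty proper subset. -/
def IsHalfSpace (F H : Set E) : Prop :=
  IsClopen H ∧ (H ∩ MaxSet F).Nonempty ∧ H ∩ MaxSet F ⊂ MaxSet F

/-- `φ` is an `H`-translation: the sets `φⁿ(H)`, `n ∈ ℤ`, are pairwise disjoint. -/
def IsHTranslation (H : Set E) (φ : Equiv.Perm E) : Prop :=
  ∀ m n : ℤ, m ≠ n → Disjoint ((φ ^ m) '' H) ((φ ^ n) '' H)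

/-- A homeomorphism is supported on `H` if it fixes every point outside `H`. -/
def SupportedOn (H : Set E) (h : Equiv.Perm E) : Prop := ∀ x ∉ H, h x = x

end EndsSpace

set_option maxHeartbeats 1000000
set_option linter.unusedSectionVars false
set_option linter.unusedVariables false

theorem Equiv.Perm.inv_apply_self {α : Type*} (f : Equiv.Perm α) (x : α) : f⁻¹ (f x) = x :=
  f.symm_apply_apply x

theorem Equiv.Perm.apply_inv_self {α : Type*} (f : Equiv.Perm α) (x : α) : f (f⁻¹ x) = x :=
  f.apply_symm_apply x



section Helpers
open TopologicalSpace Set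

attribute [local instance] Classical.propDecidable

variable {E : Type*} [TopologicalSpace E] [CompactSpace E]
  [TopologicalSpace.MetrizableSpace E] [TotallyDisconnectedSpace E]

instance (priority := 100) totSep : TotallySeparatedSpace E :=
  loc_compact_t2_tot_disc_iff_tot_sep.mp inferInstance

lemma clopen_nbhd_of_mem_nhds {s : Set E} {x : E} (hs : s ∈ nhds x) :
    ∃ V : Set E, IsClopen V ∧ x ∈ V ∧ V ⊆ s := by
  rcases (isTopologicalBasis_isClopen (X := E)).mem_nhds_iff.mp hs with ⟨V, hV, hxV, hVs⟩
  exact ⟨V, hV, hxV, hVs⟩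

lemma clopen_nbhd_of_open {U : Set E} {x : E} (hU : IsOpen U) (hx : x ∈ U) :
    ∃ V : Set E, IsClopen V ∧ x ∈ V ∧ V ⊆ U :=
  clopen_nbhd_of_mem_nhds (hU.mem_nhds hx)

lemma clopen_sep {x y : E} (h : x ≠ y) :
    ∃ V : Set E, IsClopen V ∧ x ∈ V ∧ y ∉ V := by
  rcases exists_isClopen_of_totally_separated h with ⟨V, hV, hxV, hyV⟩
  exact ⟨V, hV, hxV, fun hy => hyV hy⟩

end Helpers


open TopologicalSpace Set

attribute [local instance] Classical.propDecidable

namespace EndsPf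

variable {E : Type*} [TopologicalSpace E]

/-- A partial pair-homeomorphism from `A` to `B`, given by total functions. -/
structure PPH (F A B : Set E) where
  f : E → E
  g : E → E
  mapsTo : Set.MapsTo f A B
  mapsTo' : Set.MapsTo g B A
  linv : ∀ x ∈ A, g (f x) = x
  rinv : ∀ x ∈ B, f (g x) = x
  cont : ContinuousOn f A
  cont' : ContinuousOn g B
  memF : ∀ x ∈ A, (f x ∈ F ↔ x ∈ F)

namespace PPH

variable {F A B C : Set E}

lemma memF' (p : PPH F A B) : ∀ x ∈ B, (p.g x ∈ F ↔ x ∈ F) := by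
  intro x hx
  have h1 := p.memF (p.g x) (p.mapsTo' hx)
  rw [p.rinv x hx] at h1
  exact h1.symm

def symm (p : PPH F A B) : PPH F B A :=
  ⟨p.g, p.f, p.mapsTo', p.mapsTo, p.rinv, p.linv, p.cont', p.cont, p.memF'⟩

def comp (p : PPH F A B) (q : PPH F B C) : PPH F A C where
  f := q.f ∘ p.f
  g := p.g ∘ q.g
  mapsTo := q.mapsTo.comp p.mapsTo
  mapsTo' := p.mapsTo'.comp q.mapsTo'
  linv := fun x hx => by
    simp only [Function.comp_apply]
    rw [q.linv _ (p.mapsTo hx), p.linv _ hx]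
  rinv := fun x hx => by
    simp only [Function.comp_apply]
    rw [p.rinv _ (q.mapsTo' hx), q.rinv _ hx]
  cont := q.cont.comp p.cont p.mapsTo
  cont' := p.cont'.comp q.cont' q.mapsTo'
  memF := fun x hx => by
    simp only [Function.comp_apply]
    exact (q.memF _ (p.mapsTo hx)).trans (p.memF _ hx)

lemma injOn (p : PPH F A B) : Set.InjOn p.f A := by
  intro x hx y hy hxy
  have := congrArg p.g hxy
  rwa [p.linv _ hx, p.linv _ hy] at this

lemma image_eq (p : PPH F A B) : p.f '' A = B := by
  apply Set.Subset.antisymm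
  · rintro _ ⟨x, hx, rfl⟩; exact p.mapsTo hx
  · intro y hy; exact ⟨p.g y, p.mapsTo' hy, p.rinv y hy⟩

def refl (A : Set E) (F : Set E) : PPH F A A :=
  ⟨id, id, fun _ h => h, fun _ h => h, fun _ _ => rfl, fun _ _ => rfl,
    continuousOn_id, continuousOn_id, fun _ _ => Iff.rfl⟩

end PPH

/-- Convert a `PairHomeo` into a `PPH`. -/
noncomputable def pphOfPairHomeo {F A B : Set E} (h : PairHomeo F A B) : PPH F A B := by
  choose hom hmem using h
  exact
  { f := fun x => if hx : x ∈ A then (hom ⟨x, hx⟩ : E) else x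
    g := fun y => if hy : y ∈ B then (hom.symm ⟨y, hy⟩ : E) else y
    mapsTo := fun x hx => by simp only [dif_pos hx]; exact (hom ⟨x, hx⟩).2
    mapsTo' := fun y hy => by simp only [dif_pos hy]; exact (hom.symm ⟨y, hy⟩).2
    linv := fun x hx => by
      simp only [dif_pos hx, dif_pos (hom ⟨x, hx⟩).2]
      rw [show (⟨(hom ⟨x, hx⟩ : E), (hom ⟨x, hx⟩).2⟩ : B) = hom ⟨x, hx⟩ from rfl]
      rw [hom.symm_apply_apply]
    rinv := fun y hy => by
      simp only [dif_pos hy, dif_pos (hom.symm ⟨y, hy⟩).2]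
      rw [show (⟨(hom.symm ⟨y, hy⟩ : E), (hom.symm ⟨y, hy⟩).2⟩ : A) = hom.symm ⟨y, hy⟩ from rfl]
      rw [hom.apply_symm_apply]
    cont := by
      rw [continuousOn_iff_continuous_restrict]
      have : (A.domRestrict fun x => if hx : x ∈ A then (hom ⟨x, hx⟩ : E) else x) =
          fun x : A => (hom x : E) := by
        funext x; simp [Set.domRestrict, x.2]
      rw [this]
      exact continuous_subtype_val.comp hom.continuous
    cont' := by
      rw [continuousOn_iff_continuous_restrict]
      have : (B.domRestrict fun y => if hy : y ∈ B then (hom.symm ⟨y, hy⟩ : E) else y) =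
          fun y : B => (hom.symm y : E) := by
        funext y; simp [Set.domRestrict, y.2]
      rw [this]
      exact continuous_subtype_val.comp hom.symm.continuous
    memF := fun x hx => by simp only [dif_pos hx]; exact hmem ⟨x, hx⟩ }

/-- Convert a `PPH` into a `PairHomeo`. -/
lemma pairHomeo_of_pph {F A B : Set E} (p : PPH F A B) : PairHomeo F A B := by
  refine ⟨Homeomorph.mk ⟨fun x => ⟨p.f x, p.mapsTo x.2⟩, fun y => ⟨p.g y, p.mapsTo' y.2⟩,
    fun x => ?_, fun y => ?_⟩ ?_ ?_, fun x => p.memF x x.2⟩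
  · exact Subtype.ext (p.linv x x.2)
  · exact Subtype.ext (p.rinv y y.2)
  · exact Continuous.subtype_mk (continuousOn_iff_continuous_restrict.mp p.cont) _
  · exact Continuous.subtype_mk (continuousOn_iff_continuous_restrict.mp p.cont') _

end EndsPf

open TopologicalSpace Set
attribute [local instance] Classical.propDecidable

namespace EndsPf

variable {E : Type*} [TopologicalSpace E] [CompactSpace E]
  [TopologicalSpace.MetrizableSpace E] [TotallyDisconnectedSpace E]
variable {F A B : Set E}

/-- Restriction of a PPH to a clopen subset; the image is clopen. -/
lemma pph_restrict (p : PPH F A B) (hA : IsClopen A) (hB : IsClopen B)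
    {A₀ : Set E} (hA₀ : IsClopen A₀) (hsub : A₀ ⊆ A) :
    IsClopen (p.f '' A₀) ∧ p.f '' A₀ ⊆ B ∧ Nonempty (PPH F A₀ (p.f '' A₀)) := by
  have hsubB : p.f '' A₀ ⊆ B := by
    rintro _ ⟨x, hx, rfl⟩; exact p.mapsTo (hsub hx)
  have hcompact : ∀ s : Set E, IsClosed s → s ⊆ A → IsClosed (p.f '' s) := by
    intro s hs hsA
    exact ((hs.isCompact).image_of_continuousOn (p.cont.mono hsA)).isClosed
  have hclosed : IsClosed (p.f '' A₀) := hcompact A₀ hA₀.isClosed hsub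
  have himdiff : IsClosed (p.f '' (A \ A₀)) :=
    hcompact (A \ A₀) (hA.isClosed.sdiff hA₀.isOpen) diff_subset
  have hopen : p.f '' A₀ = B \ p.f '' (A \ A₀) := by
    apply Subset.antisymm
    · rintro _ ⟨x, hx, rfl⟩
      refine ⟨p.mapsTo (hsub hx), ?_⟩
      rintro ⟨y, hy, hxy⟩
      exact hy.2 (p.injOn hy.1 (hsub hx) hxy ▸ hx)
    · rintro y ⟨hyB, hyim⟩
      refine ⟨p.g y, ?_, p.rinv y hyB⟩
      by_contra hgy
      exact hyim ⟨p.g y, ⟨p.mapsTo' hyB, hgy⟩, p.rinv y hyB⟩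
  refine ⟨⟨hclosed, ?_⟩, hsubB, ⟨{
    f := p.f, g := p.g
    mapsTo := fun x hx => ⟨x, hx, rfl⟩
    mapsTo' := ?_
    linv := fun x hx => p.linv x (hsub hx)
    rinv := fun y hy => p.rinv y (hsubB hy)
    cont := p.cont.mono hsub
    cont' := p.cont'.mono hsubB
    memF := fun x hx => p.memF x (hsub hx) }⟩⟩
  · rw [hopen]
    exact hB.isOpen.sdiff himdiff
  · rintro _ ⟨x, hx, rfl⟩
    rw [p.linv x (hsub hx)]; exact hx

/-- The swap of two disjoint sets along a PPH, as a function. -/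
noncomputable def swapFun (p : PPH F A B) : E → E :=
  fun x => if x ∈ A then p.f x else if x ∈ B then p.g x else x

lemma swapFun_involutive (p : PPH F A B) (hd : Disjoint A B) :
    Function.Involutive (swapFun p) := by
  intro x
  unfold swapFun
  by_cases hx : x ∈ A
  · have h1 : p.f x ∈ B := p.mapsTo hx
    have h2 : p.f x ∉ A := fun h => (Set.disjoint_left.mp hd h) h1
    simp [hx, h1, h2, p.linv x hx]
  · by_cases hx' : x ∈ B
    · have h1 : p.g x ∈ A := p.mapsTo' hx'
      simp [hx, hx', h1, p.rinv x hx']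
    · simp [hx, hx']

/-- The swap permutation. -/
noncomputable def swapPerm (p : PPH F A B) (hd : Disjoint A B) : Equiv.Perm E :=
  (swapFun_involutive p hd).toPerm

lemma swapPerm_apply (p : PPH F A B) (hd : Disjoint A B) (x : E) :
    swapPerm p hd x = swapFun p x := rfl

lemma swapPerm_inv (p : PPH F A B) (hd : Disjoint A B) :
    (swapPerm p hd)⁻¹ = swapPerm p hd := rfl

lemma swapPerm_apply_left (p : PPH F A B) (hd : Disjoint A B) {x : E} (hx : x ∈ A) :
    swapPerm p hd x = p.f x := by simp [swapPerm_apply, swapFun, hx]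

lemma swapPerm_apply_right (p : PPH F A B) (hd : Disjoint A B) {x : E} (hx : x ∈ B) :
    swapPerm p hd x = p.g x := by
  have : x ∉ A := fun h => (Set.disjoint_left.mp hd h) hx
  simp [swapPerm_apply, swapFun, hx, this]

lemma swapPerm_apply_off (p : PPH F A B) (hd : Disjoint A B) {x : E}
    (hx : x ∉ A) (hx' : x ∉ B) : swapPerm p hd x = x := by
  simp [swapPerm_apply, swapFun, hx, hx']

lemma swapFun_continuous (p : PPH F A B) (hd : Disjoint A B)
    (hA : IsClopen A) (hB : IsClopen B) : Continuous (swapFun p) := by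
  rw [continuous_iff_continuousAt]
  intro x
  by_cases hx : x ∈ A
  · have : ContinuousAt p.f x := p.cont.continuousAt (hA.isOpen.mem_nhds hx)
    apply this.congr
    filter_upwards [hA.isOpen.mem_nhds hx] with y hy
    simp [swapFun, hy]
  · by_cases hx' : x ∈ B
    · have : ContinuousAt p.g x := p.cont'.continuousAt (hB.isOpen.mem_nhds hx')
      apply this.congr
      have hyA : ∀ y ∈ B, y ∉ A := fun y hy h => (Set.disjoint_left.mp hd h) hy
      filter_upwards [hB.isOpen.mem_nhds hx'] with y hy
      simp [swapFun, hy, hyA y hy]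
    · have : ContinuousAt id x := continuousAt_id
      apply this.congr
      have hmem : (A ∪ B)ᶜ ∈ nhds x :=
        ((hA.isClosed.union hB.isClosed).isOpen_compl).mem_nhds (by simp [hx, hx'])
      filter_upwards [hmem] with y hy
      simp only [mem_compl_iff, mem_union, not_or] at hy
      simp [swapFun, hy.1, hy.2]

lemma swapPerm_mem (p : PPH F A B) (hd : Disjoint A B)
    (hA : IsClopen A) (hB : IsClopen B) : swapPerm p hd ∈ EndsHomeo F := by
  refine ⟨swapFun_continuous p hd hA hB, ?_, ?_⟩
  · have : ⇑(swapPerm p hd).symm = swapFun p := rfl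
    rw [this]; exact swapFun_continuous p hd hA hB
  · intro x
    show swapFun p x ∈ F ↔ x ∈ F
    unfold swapFun
    by_cases hx : x ∈ A
    · simp only [if_pos hx]; exact p.memF x hx
    · by_cases hx' : x ∈ B
      · simp only [if_neg hx, if_pos hx']; exact p.memF' x hx'
      · simp [hx, hx']

end EndsPf

open TopologicalSpace Set
attribute [local instance] Classical.propDecidable

namespace EndsPf

variable {E : Type*} [TopologicalSpace E] [CompactSpace E]
  [TopologicalSpace.MetrizableSpace E] [TotallyDisconnectedSpace E]
variable {F : Set E}

lemma pairHomeo_symm {A B : Set E} (h : PairHomeo F A B) : PairHomeo F B A := by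
  obtain ⟨hom, hmem⟩ := h
  refine ⟨hom.symm, fun y => ?_⟩
  have := hmem (hom.symm y)
  rw [hom.apply_symm_apply] at this
  exact this.symm

/-- Transport of the ends preorder along a partial pair-homeomorphism. -/
lemma pph_endsEquiv {V D : Set E} (p : PPH F V D) (hV : IsClopen V) (hD : IsClopen D)
    {z : E} (hz : z ∈ V) : EndsEquiv F z (p.f z) := by
  constructor
  · intro U hU hfz
    have hWc : IsClopen (U ∩ D) := hU.inter hD
    have hWsub : U ∩ D ⊆ D := inter_subset_right
    obtain ⟨hCc, hCV, ⟨q⟩⟩ := pph_restrict p.symm hD hV hWc hWsub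
    refine ⟨U ∩ D, inter_subset_left, hWc, p.g '' (U ∩ D), hCc, ?_, ?_⟩
    · exact ⟨p.f z, ⟨hfz, p.mapsTo hz⟩, p.linv z hz⟩
    · exact pairHomeo_of_pph q.symm
  · intro U hU hzU
    have hWc : IsClopen (U ∩ V) := hU.inter hV
    obtain ⟨hCc, hCD, ⟨q⟩⟩ := pph_restrict p hV hD hWc inter_subset_right
    refine ⟨U ∩ V, inter_subset_left, hWc, p.f '' (U ∩ V), hCc, ⟨z, ⟨hzU, hz⟩, rfl⟩, ?_⟩
    exact pairHomeo_of_pph q.symm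

lemma endsLE_trans {x y z : E} (h1 : EndsLE F x y) (h2 : EndsLE F y z) : EndsLE F x z := by
  intro U hU hz
  obtain ⟨D, hDU, hDc, V, hVc, hyV, hp⟩ := h2 U hU hz
  obtain ⟨D₂, hD₂V, hD₂c, V₂, hV₂c, hxV₂, hp₂⟩ := h1 V hVc hyV
  set p := pphOfPairHomeo hp
  obtain ⟨hCc, hCD, ⟨q⟩⟩ := pph_restrict p hVc hDc hD₂c hD₂V
  obtain ⟨p₂⟩ : Nonempty (PPH F V₂ D₂) := ⟨pphOfPairHomeo hp₂⟩
  exact ⟨p.f '' D₂, hCD.trans hDU, hCc, V₂, hV₂c, hxV₂,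
    pairHomeo_of_pph (p₂.comp q)⟩

lemma endsEquiv_symm {x y : E} (h : EndsEquiv F x y) : EndsEquiv F y x := ⟨h.2, h.1⟩

lemma endsEquiv_trans {x y z : E} (h1 : EndsEquiv F x y) (h2 : EndsEquiv F y z) :
    EndsEquiv F x z := ⟨endsLE_trans h1.1 h2.1, endsLE_trans h2.2 h1.2⟩

/-- With `MaxSet` a single equivalence class, maximality transports along `∼`. -/
lemma maxset_transport {x₀ : E} (hclass : MaxSet F = {y | EndsEquiv F x₀ y})
    {z w : E} (hz : z ∈ MaxSet F) (hzw : EndsEquiv F z w) : w ∈ MaxSet F := by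
  rw [hclass] at hz ⊢
  exact endsEquiv_trans hz hzw

lemma pph_max {V D : Set E} (p : PPH F V D) (hV : IsClopen V) (hD : IsClopen D)
    {x₀ : E} (hclass : MaxSet F = {y | EndsEquiv F x₀ y})
    {z : E} (hz : z ∈ V) (hmz : z ∈ MaxSet F) : p.f z ∈ MaxSet F :=
  maxset_transport hclass hmz (pph_endsEquiv p hV hD hz)

/-- A stable point: every clopen neighbourhood contains a copy of `(E,F)`. -/
def Stable (F : Set E) (z : E) : Prop :=
  ∀ U : Set E, IsClopen U → z ∈ U → ∃ D, D ⊆ U ∧ IsClopen D ∧ PairHomeo F D Set.univ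

lemma exists_stable (hss : SelfSimilarPair F) : ∃ z : E, Stable F z := by
  by_contra hcon
  push_neg at hcon
  simp only [Stable, not_forall, not_exists] at hcon
  have h' : ∀ z : E, ∃ U : Set E, IsClopen U ∧ z ∈ U ∧
      ∀ D, D ⊆ U → IsClopen D → ¬PairHomeo F D Set.univ := by
    intro z
    obtain ⟨U, hU, hz, hno⟩ := hcon z
    exact ⟨U, hU, hz, fun D h1 h2 h3 => hno D ⟨h1, h2, h3⟩⟩
  choose U hUc hUz hUno using h'
  obtain ⟨t, ht⟩ := IsCompact.elim_finite_subcover isCompact_univ U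
    (fun z => (hUc z).isOpen) (fun x _ => mem_iUnion.mpr ⟨x, hUz x⟩)
  set n := t.card with hn
  set e : {x // x ∈ t} ≃ Fin n := t.equivFin with he
  set W : Fin n → Set E := fun i => U (e.symm i) \ ⋃ (j : Fin n) (_ : j < i), U (e.symm j)
    with hW
  have hWc : ∀ i, IsClopen (W i) := by
    intro i
    apply (hUc _).diff
    exact isClopen_iUnion_of_finite (fun j => isClopen_iUnion_of_finite fun _ => hUc _)
  have hWU : ∀ i, W i ⊆ U (e.symm i) := fun i => diff_subset
  have hWdis : ∀ i j : Fin n, i ≠ j → Disjoint (W i) (W j) := by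
    have key : ∀ i j : Fin n, i < j → Disjoint (W i) (W j) := by
      intro i j hij
      rw [Set.disjoint_left]
      intro x hxi hxj
      exact hxj.2 (mem_iUnion.mpr ⟨i, mem_iUnion.mpr ⟨hij, hWU i hxi⟩⟩)
    intro i j hij
    rcases lt_or_gt_of_ne hij with h | h
    · exact key i j h
    · exact (key j i h).symm
  have hWcover : (⋃ i, W i) = Set.univ := by
    apply Set.eq_univ_of_forall
    intro x
    have hx : ∃ i : Fin n, x ∈ U (e.symm i) := by
      have := ht (mem_univ x)
      rw [Set.mem_iUnion₂] at this
      obtain ⟨z, hzt, hxz⟩ := this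
      refine ⟨e ⟨z, hzt⟩, ?_⟩
      rw [Equiv.symm_apply_apply]
      exact hxz
    set s := Finset.univ.filter (fun i : Fin n => x ∈ U (e.symm i)) with hs
    have hsne : s.Nonempty := by
      obtain ⟨i, hi⟩ := hx
      exact ⟨i, by simp [hs, hi]⟩
    set i₀ := s.min' hsne with hi₀
    have hi₀s : i₀ ∈ s := s.min'_mem hsne
    rw [hs, Finset.mem_filter] at hi₀s
    refine mem_iUnion.mpr ⟨i₀, hi₀s.2, ?_⟩
    intro hmem
    rw [mem_iUnion] at hmem
    obtain ⟨j, hj⟩ := hmem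
    rw [mem_iUnion] at hj
    obtain ⟨hji, hxj⟩ := hj
    have : i₀ ≤ j := s.min'_le j (by simp [hs, hxj])
    exact absurd hji (not_lt.mpr this)
  -- filter out the empty pieces
  set s' := Finset.univ.filter (fun i : Fin n => (W i).Nonempty) with hs'
  set m := s'.card with hm
  set f : {x // x ∈ s'} ≃ Fin m := s'.equivFin with hf
  set P : Fin m → Set E := fun k => W (f.symm k) with hP
  have hPc : ∀ k, IsClopen (P k) := fun k => hWc _
  have hPne : ∀ k, (P k).Nonempty := by
    intro k
    have h2 := (f.symm k).2
    simp only [hs', Finset.mem_filter] at h2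
    exact h2.2
  have hPdis : Pairwise (Function.onFun Disjoint P) := by
    intro k l hkl
    apply hWdis
    intro hcontra
    apply hkl
    have : f.symm k = f.symm l := Subtype.ext hcontra
    have := congrArg f this
    rwa [Equiv.apply_symm_apply, Equiv.apply_symm_apply] at this
  have hPcover : (⋃ k, P k) = Set.univ := by
    apply Set.eq_univ_of_forall
    intro x
    have hx : x ∈ ⋃ i, W i := hWcover ▸ mem_univ x
    rw [mem_iUnion] at hx
    obtain ⟨i, hi⟩ := hx
    have his' : i ∈ s' := by simp [hs']; exact ⟨x, hi⟩
    refine mem_iUnion.mpr ⟨f ⟨i, his'⟩, ?_⟩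
    show x ∈ W (f.symm (f ⟨i, his'⟩) : Fin n)
    rw [Equiv.symm_apply_apply]
    exact hi
  obtain ⟨k, D, hDc, hDP, hDpair⟩ := hss m P hPc hPne hPdis hPcover
  exact hUno _ D (hDP.trans (hWU _)) hDc hDpair

lemma stable_endsLE {z : E} (hz : Stable F z) (y : E) : EndsLE F y z := by
  intro U hU hzU
  obtain ⟨D, hDU, hDc, hpair⟩ := hz U hU hzU
  exact ⟨D, hDU, hDc, Set.univ, isClopen_univ, mem_univ y, pairHomeo_symm hpair⟩

lemma endsLE_stable_stable {z x : E} (h : EndsLE F z x) (hz : Stable F z) : Stable F x := by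
  intro U hU hxU
  obtain ⟨D', hD'U, hD'c, V, hVc, hzV, hpair⟩ := h U hU hxU
  obtain ⟨C, hCV, hCc, hCpair⟩ := hz V hVc hzV
  set p := pphOfPairHomeo hpair
  obtain ⟨hKc, hKD, ⟨q⟩⟩ := pph_restrict p hVc hD'c hCc hCV
  refine ⟨p.f '' C, hKD.trans hD'U, hKc, ?_⟩
  exact pairHomeo_of_pph (q.symm.comp (pphOfPairHomeo hCpair))

lemma maximal_stable (hss : SelfSimilarPair F) {x : E} (hx : x ∈ MaxSet F) : Stable F x := by
  obtain ⟨z, hz⟩ := exists_stable (F := F) hss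
  exact endsLE_stable_stable (hx z (stable_endsLE hz x)) hz

/-- Inside every clopen neighbourhood of a stable point there is a clopen copy of
any given clopen set. -/
lemma stable_copy {x : E} (hx : Stable F x) {U : Set E} (hU : IsClopen U) (hxU : x ∈ U)
    (K : Set E) (hK : IsClopen K) :
    ∃ A, IsClopen A ∧ A ⊆ U ∧ Nonempty (PPH F K A) := by
  obtain ⟨D, hDU, hDc, hpair⟩ := hx U hU hxU
  set q := (pphOfPairHomeo hpair).symm
  obtain ⟨hAc, hAD, ⟨r⟩⟩ := pph_restrict q isClopen_univ hDc hK (subset_univ K)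
  exact ⟨q.f '' K, hAc, hAD.trans hDU, ⟨r⟩⟩

/-- A global homeomorphism in `EndsHomeo F` as a `PPH` on `univ`. -/
def pphGlobal {g : Equiv.Perm E} (hg : g ∈ EndsHomeo F) :
    PPH F (Set.univ : Set E) (Set.univ : Set E) :=
  ⟨g, g.symm, fun x _ => mem_univ _, fun x _ => mem_univ _,
    fun x _ => g.symm_apply_apply x, fun x _ => g.apply_symm_apply x,
    hg.1.continuousOn, hg.2.1.continuousOn, fun x _ => hg.2.2 x⟩

lemma global_max {g : Equiv.Perm E} (hg : g ∈ EndsHomeo F)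
    {x₀ : E} (hclass : MaxSet F = {y | EndsEquiv F x₀ y})
    {z : E} (hz : z ∈ MaxSet F) : g z ∈ MaxSet F :=
  pph_max (pphGlobal hg) isClopen_univ isClopen_univ hclass (mem_univ z) hz

end EndsPf

open TopologicalSpace Set
attribute [local instance] Classical.propDecidable

namespace EndsPf

lemma cantor_not_isolated (f : ℕ → Bool) (O : Set (ℕ → Bool)) (hO : IsOpen O)
    (hf : f ∈ O) : ∃ g ∈ O, g ≠ f := by
  rw [isOpen_pi_iff] at hO
  obtain ⟨I, u, hu, hsub⟩ := hO f hf
  set N := I.sup id + 1 with hN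
  have hNI : N ∉ I := by
    intro hmem
    have := Finset.le_sup (f := id) hmem
    simp only [id] at this
    omega
  refine ⟨Function.update f N (!f N), hsub ?_, ?_⟩
  · intro i hi
    have hiN : i ≠ N := by
      intro h
      rw [h] at hi
      exact hNI hi
    rw [Function.update_of_ne hiN]
    exact (hu i hi).2
  · intro h
    have := congrFun h N
    rw [Function.update_self] at this
    exact (Bool.not_ne_self (f N)) this

variable {E : Type*} [TopologicalSpace E] [CompactSpace E]
  [TopologicalSpace.MetrizableSpace E] [TotallyDisconnectedSpace E]
variable {F : Set E}

lemma maxset_nonempty (e : ↥(MaxSet F) ≃ₜ (ℕ → Bool)) : ∃ x, x ∈ MaxSet F :=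
  ⟨(e.symm (fun _ => false) : ↥(MaxSet F)), (e.symm (fun _ => false)).2⟩

lemma maxset_second (e : ↥(MaxSet F) ≃ₜ (ℕ → Bool)) {x : E} (hx : x ∈ MaxSet F)
    {U : Set E} (hU : IsOpen U) (hxU : x ∈ U) :
    ∃ y, y ∈ MaxSet F ∧ y ∈ U ∧ y ≠ x := by
  set S : Set ↥(MaxSet F) := {z | (z : E) ∈ U} with hS
  have hSopen : IsOpen S := hU.preimage continuous_subtype_val
  set O := ⇑e.symm ⁻¹' S with hO
  have hOopen : IsOpen O := hSopen.preimage e.symm.continuous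
  have hfO : e ⟨x, hx⟩ ∈ O := by
    show e.symm (e ⟨x, hx⟩) ∈ S
    rw [e.symm_apply_apply]
    exact hxU
  obtain ⟨g, hgO, hgne⟩ := cantor_not_isolated _ O hOopen hfO
  refine ⟨(e.symm g : E), (e.symm g).2, hgO, ?_⟩
  intro h
  apply hgne
  have : e.symm g = ⟨x, hx⟩ := Subtype.ext h
  have := congrArg e this
  rwa [e.apply_symm_apply] at this

lemma maxset_six (e : ↥(MaxSet F) ≃ₜ (ℕ → Bool)) :
    ∃ xs : Fin 6 → E, (∀ i, xs i ∈ MaxSet F) ∧ Function.Injective xs := by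
  set g : Fin 6 → (ℕ → Bool) := fun i => fun n => decide (n = (i : ℕ)) with hg
  have hginj : Function.Injective g := by
    intro i j hij
    have := congrFun hij (i : ℕ)
    simp only [hg, decide_eq_decide] at this
    have : (i : ℕ) = (j : ℕ) := by tauto
    exact Fin.ext this
  refine ⟨fun i => (e.symm (g i) : E), fun i => (e.symm (g i)).2, ?_⟩
  intro i j hij
  exact hginj (e.symm.injective (Subtype.ext hij))

lemma disjoint_clopen_nbhds {k : ℕ} (xs : Fin k → E) (hinj : Function.Injective xs) :
    ∃ Q : Fin k → Set E, (∀ i, IsClopen (Q i)) ∧ (∀ i, xs i ∈ Q i) ∧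
      (∀ i j, i ≠ j → Disjoint (Q i) (Q j)) := by
  have h : ∀ i j : Fin k, ∃ V : Set E, IsClopen V ∧ xs i ∈ V ∧ (i ≠ j → xs j ∉ V) := by
    intro i j
    by_cases hij : i = j
    · exact ⟨Set.univ, isClopen_univ, mem_univ _, fun h => absurd hij h⟩
    · obtain ⟨V, hVc, hxi, hxj⟩ := clopen_sep (fun h => hij (hinj h))
      exact ⟨V, hVc, hxi, fun _ => hxj⟩
  choose W hWc hWi hWj using h
  set Q : Fin k → Set E := fun i => (⋂ j, W i j) \ (⋃ (j) (_ : j ≠ i), W j i) with hQ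
  refine ⟨Q, fun i => ?_, fun i => ?_, fun i j hij => ?_⟩
  · exact (isClopen_iInter_of_finite (fun j => hWc i j)).diff
      (isClopen_iUnion_of_finite fun j => isClopen_iUnion_of_finite fun _ => hWc j i)
  · constructor
    · exact mem_iInter.mpr (fun j => hWi i j)
    · intro hmem
      rw [mem_iUnion] at hmem
      obtain ⟨j, hj⟩ := hmem
      rw [mem_iUnion] at hj
      obtain ⟨hji, hmem⟩ := hj
      exact hWj j i hji hmem
  · rw [Set.disjoint_left]
    intro z hzi hzj
    apply hzj.2
    refine mem_iUnion.mpr ⟨i, mem_iUnion.mpr ⟨hij, ?_⟩⟩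
    exact mem_iInter.mp hzi.1 j

/-- Inside every clopen neighbourhood of a maximal end there is a clopen copy of any
clopen set, avoiding the end itself. -/
lemma copy_avoiding (hss : SelfSimilarPair F) (e : ↥(MaxSet F) ≃ₜ (ℕ → Bool))
    {x : E} (hx : x ∈ MaxSet F) {U : Set E} (hU : IsClopen U) (hxU : x ∈ U)
    (K : Set E) (hK : IsClopen K) :
    ∃ A, IsClopen A ∧ A ⊆ U ∧ x ∉ A ∧ Nonempty (PPH F K A) := by
  obtain ⟨y, hyM, hyU, hyx⟩ := maxset_second e hx hU.isOpen hxU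
  obtain ⟨V, hVc, hyV, hxV⟩ := clopen_sep hyx
  have hYc : IsClopen (U ∩ V) := hU.inter hVc
  obtain ⟨A, hAc, hAY, ⟨p⟩⟩ := stable_copy (maximal_stable hss hyM) hYc ⟨hyU, hyV⟩ K hK
  exact ⟨A, hAc, hAY.trans inter_subset_left, fun hxA => hxV (hAY hxA).2, ⟨p⟩⟩

end EndsPf

open TopologicalSpace Set
attribute [local instance] Classical.propDecidable

namespace EndsPf

variable {E : Type*} [TopologicalSpace E] [CompactSpace E]
  [TopologicalSpace.MetrizableSpace E] [TotallyDisconnectedSpace E]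
variable {F : Set E}

/-- A two-sided chain of disjoint clopen copies of a clopen set `H 0`,
accumulating only at the two points `yp` (for `n → ∞`) and `ym` (for `n → -∞`). -/
structure Chain (F : Set E) where
  H : ℤ → Set E
  clopen : ∀ n, IsClopen (H n)
  disj : ∀ m n : ℤ, m ≠ n → Disjoint (H m) (H n)
  yp : E
  ym : E
  hne : yp ≠ ym
  ypH : ∀ n, yp ∉ H n
  ymH : ∀ n, ym ∉ H n
  tailp : ∀ U ∈ nhds yp, ∃ N : ℤ, ∀ n ≥ N, H n ⊆ U
  tailm : ∀ U ∈ nhds ym, ∃ N : ℤ, ∀ n ≤ N, H n ⊆ U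
  psiF : ℤ → E → E
  psiG : ℤ → E → E
  psi0 : ∀ x ∈ H 0, psiF 0 x = x
  psiMapsTo : ∀ n, Set.MapsTo (psiF n) (H 0) (H n)
  psiMapsTo' : ∀ n, Set.MapsTo (psiG n) (H n) (H 0)
  psiLinv : ∀ n, ∀ x ∈ H 0, psiG n (psiF n x) = x
  psiRinv : ∀ n, ∀ x ∈ H n, psiF n (psiG n x) = x
  psiCont : ∀ n, ContinuousOn (psiF n) (H 0)
  psiCont' : ∀ n, ContinuousOn (psiG n) (H n)
  psiMemF : ∀ n, ∀ x ∈ H 0, (psiF n x ∈ F ↔ x ∈ F)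

namespace Chain

variable (C : Chain F)

lemma psi0' : ∀ x ∈ C.H 0, C.psiG 0 x = x := by
  intro x hx
  have h := C.psiLinv 0 x hx
  rwa [C.psi0 x hx] at h

lemma mem_unique {x : E} {m n : ℤ} (hm : x ∈ C.H m) (hn : x ∈ C.H n) : m = n := by
  by_contra h
  exact (Set.disjoint_left.mp (C.disj m n h) hm) hn

/-- Union of an arbitrary family of the `H n` glued with the identity outside. -/
noncomputable def glueF (θ : ℤ → E → E) : E → E :=
  fun x => if h : ∃ n, x ∈ C.H n then θ (Classical.choose h) x else x

lemma glueF_mem (θ : ℤ → E → E) {x : E} {n : ℤ} (hx : x ∈ C.H n) :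
    C.glueF θ x = θ n x := by
  have h : ∃ m, x ∈ C.H m := ⟨n, hx⟩
  rw [glueF, dif_pos h, C.mem_unique (Classical.choose_spec h) hx]

lemma glueF_not (θ : ℤ → E → E) {x : E} (hx : ∀ n, x ∉ C.H n) :
    C.glueF θ x = x := by
  rw [glueF, dif_neg]
  rintro ⟨n, hn⟩
  exact hx n hn

end Chain

/-- Data describing a homeomorphism glued from partial maps `θ n : H n → H (π n)`. -/
structure GlueData (F : Set E) (C : Chain F) where
  π : ℤ → ℤ
  π' : ℤ → ℤ
  θ : ℤ → E → E
  θ' : ℤ → E → E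
  hππ' : ∀ n, π' (π n) = n
  hπ'π : ∀ n, π (π' n) = n
  hmap : ∀ n, Set.MapsTo (θ n) (C.H n) (C.H (π n))
  hmap' : ∀ n, Set.MapsTo (θ' n) (C.H n) (C.H (π' n))
  hinv : ∀ n, ∀ x ∈ C.H n, θ' (π n) (θ n x) = x
  hinv' : ∀ n, ∀ x ∈ C.H n, θ (π' n) (θ' n x) = x
  hcont : ∀ n, ContinuousOn (θ n) (C.H n)
  hcont' : ∀ n, ContinuousOn (θ' n) (C.H n)
  hF : ∀ n, ∀ x ∈ C.H n, (θ n x ∈ F ↔ x ∈ F)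
  hbd : ∃ c : ℤ, 0 ≤ c ∧ ∀ n, |π n - n| ≤ c ∧ |π' n - n| ≤ c

namespace GlueData

variable {C : Chain F} (d : GlueData F C)

lemma hF' : ∀ n, ∀ x ∈ C.H n, (d.θ' n x ∈ F ↔ x ∈ F) := by
  intro n x hx
  have h1 := d.hF (d.π' n) (d.θ' n x) (d.hmap' n hx)
  rw [d.hinv' n x hx] at h1
  exact h1.symm

def symm : GlueData F C :=
  ⟨d.π', d.π, d.θ', d.θ, d.hπ'π, d.hππ', d.hmap', d.hmap, d.hinv', d.hinv,
    d.hcont', d.hcont, d.hF', by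
      obtain ⟨c, hc0, hc⟩ := d.hbd
      exact ⟨c, hc0, fun n => ⟨(hc n).2, (hc n).1⟩⟩⟩

noncomputable def toFun : E → E := C.glueF d.θ

noncomputable def invFun : E → E := C.glueF d.θ'

lemma left_inv : Function.LeftInverse d.invFun d.toFun := by
  intro x
  by_cases h : ∃ n, x ∈ C.H n
  · obtain ⟨n, hn⟩ := h
    rw [toFun, C.glueF_mem _ hn, invFun, C.glueF_mem _ (d.hmap n hn), d.hinv n x hn]
  · push_neg at h
    rw [toFun, C.glueF_not _ h, invFun, C.glueF_not _ h]

lemma right_inv : Function.RightInverse d.invFun d.toFun := by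
  intro x
  by_cases h : ∃ n, x ∈ C.H n
  · obtain ⟨n, hn⟩ := h
    rw [invFun, C.glueF_mem _ hn, toFun, C.glueF_mem _ (d.hmap' n hn), d.hinv' n x hn]
  · push_neg at h
    rw [invFun, C.glueF_not _ h, toFun, C.glueF_not _ h]

noncomputable def perm : Equiv.Perm E := ⟨d.toFun, d.invFun, d.left_inv, d.right_inv⟩

lemma perm_apply_mem {x : E} {n : ℤ} (hx : x ∈ C.H n) : d.perm x = d.θ n x :=
  C.glueF_mem _ hx

lemma perm_apply_not {x : E} (hx : ∀ n, x ∉ C.H n) : d.perm x = x :=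
  C.glueF_not _ hx

lemma perm_inv_eq : d.perm⁻¹ = d.symm.perm := rfl

/-- Tail condition for the images. -/
lemma tail_image_p : ∀ U ∈ nhds C.yp, ∃ M : ℤ, ∀ n ≥ M, C.H (d.π n) ⊆ U := by
  intro U hU
  obtain ⟨N, hN⟩ := C.tailp U hU
  obtain ⟨c, hc0, hc⟩ := d.hbd
  refine ⟨N + c, fun n hn => hN (d.π n) ?_⟩
  have := (hc n).1
  rw [abs_le] at this
  omega

lemma tail_image_m : ∀ U ∈ nhds C.ym, ∃ M : ℤ, ∀ n ≤ M, C.H (d.π n) ⊆ U := by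
  intro U hU
  obtain ⟨N, hN⟩ := C.tailm U hU
  obtain ⟨c, hc0, hc⟩ := d.hbd
  refine ⟨N - c, fun n hn => hN (d.π n) ?_⟩
  have := (hc n).1
  rw [abs_le] at this
  omega

lemma toFun_continuous : Continuous d.toFun := by
  rw [continuous_iff_continuousAt]
  intro x
  by_cases hx : ∃ n, x ∈ C.H n
  · obtain ⟨n, hn⟩ := hx
    have : ContinuousAt (d.θ n) x := (d.hcont n).continuousAt ((C.clopen n).isOpen.mem_nhds hn)
    apply this.congr
    filter_upwards [(C.clopen n).isOpen.mem_nhds hn] with y hy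
    exact (C.glueF_mem _ hy).symm
  · push_neg at hx
    by_cases hyp : x = C.yp
    · subst hyp
      have hval : d.toFun C.yp = C.yp := C.glueF_not _ hx
      show Filter.Tendsto d.toFun (nhds C.yp) (nhds (d.toFun C.yp))
      rw [hval, Filter.tendsto_def]
      intro O hO
      obtain ⟨O₁, hO₁c, hypO₁, hO₁O⟩ := clopen_nbhd_of_mem_nhds hO
      obtain ⟨M₁, hM₁⟩ := d.tail_image_p O₁ (hO₁c.isOpen.mem_nhds hypO₁)
      obtain ⟨Cm, hCmc, hymCm, hypCm⟩ := clopen_sep C.hne.symm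
      obtain ⟨M₂, hM₂⟩ := C.tailm Cm (hCmc.isOpen.mem_nhds hymCm)
      set B := ⋃ m ∈ Finset.Icc M₂ M₁, C.H m with hB
      have hBc : IsClopen B :=
        Set.Finite.isClopen_biUnion (Finset.Icc M₂ M₁).finite_toSet (fun m _ => C.clopen m)
      have hWnb : (O₁ ∩ Cmᶜ) \ B ∈ nhds C.yp := by
        apply IsOpen.mem_nhds ((hO₁c.inter hCmc.compl).diff hBc).isOpen
        refine ⟨⟨hypO₁, hypCm⟩, ?_⟩
        intro hmem
        rw [hB, Set.mem_iUnion₂] at hmem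
        obtain ⟨m, _, hm⟩ := hmem
        exact hx m hm
      apply Filter.mem_of_superset hWnb
      intro z hz
      show d.toFun z ∈ O
      apply hO₁O
      by_cases hzH : ∃ n, z ∈ C.H n
      · obtain ⟨n, hn⟩ := hzH
        have h1 : ¬n ≤ M₂ := fun h => hz.1.2 (hM₂ n h hn)
        have h2 : ¬(M₂ ≤ n ∧ n ≤ M₁) := by
          rintro ⟨ha, hb⟩
          exact hz.2 (Set.mem_iUnion₂.mpr ⟨n, Finset.mem_Icc.mpr ⟨ha, hb⟩, hn⟩)
        have h3 : n ≥ M₁ := by omega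
        have := C.glueF_mem d.θ hn
        rw [show d.toFun z = d.θ n z from this]
        exact hM₁ n h3 (d.hmap n hn)
      · push_neg at hzH
        rw [show d.toFun z = z from C.glueF_not _ hzH]
        exact hz.1.1
    · by_cases hym : x = C.ym
      · subst hym
        have hval : d.toFun C.ym = C.ym := C.glueF_not _ hx
        show Filter.Tendsto d.toFun (nhds C.ym) (nhds (d.toFun C.ym))
        rw [hval, Filter.tendsto_def]
        intro O hO
        obtain ⟨O₁, hO₁c, hymO₁, hO₁O⟩ := clopen_nbhd_of_mem_nhds hO
        obtain ⟨M₁, hM₁⟩ := d.tail_image_m O₁ (hO₁c.isOpen.mem_nhds hymO₁)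
        obtain ⟨Cp, hCpc, hypCp, hymCp⟩ := clopen_sep C.hne
        obtain ⟨M₂, hM₂⟩ := C.tailp Cp (hCpc.isOpen.mem_nhds hypCp)
        set B := ⋃ m ∈ Finset.Icc M₁ M₂, C.H m with hB
        have hBc : IsClopen B :=
          Set.Finite.isClopen_biUnion (Finset.Icc M₁ M₂).finite_toSet (fun m _ => C.clopen m)
        have hWnb : (O₁ ∩ Cpᶜ) \ B ∈ nhds C.ym := by
          apply IsOpen.mem_nhds ((hO₁c.inter hCpc.compl).diff hBc).isOpen
          refine ⟨⟨hymO₁, hymCp⟩, ?_⟩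
          intro hmem
          rw [hB, Set.mem_iUnion₂] at hmem
          obtain ⟨m, _, hm⟩ := hmem
          exact hx m hm
        apply Filter.mem_of_superset hWnb
        intro z hz
        show d.toFun z ∈ O
        apply hO₁O
        by_cases hzH : ∃ n, z ∈ C.H n
        · obtain ⟨n, hn⟩ := hzH
          have h1 : ¬n ≥ M₂ := fun h => hz.1.2 (hM₂ n h hn)
          have h2 : ¬(M₁ ≤ n ∧ n ≤ M₂) := by
            rintro ⟨ha, hb⟩
            exact hz.2 (Set.mem_iUnion₂.mpr ⟨n, Finset.mem_Icc.mpr ⟨ha, hb⟩, hn⟩)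
          have h3 : n ≤ M₁ := by omega
          rw [show d.toFun z = d.θ n z from C.glueF_mem d.θ hn]
          exact hM₁ n h3 (d.hmap n hn)
        · push_neg at hzH
          rw [show d.toFun z = z from C.glueF_not _ hzH]
          exact hz.1.1
      · -- x away from everything: locally the identity
        obtain ⟨Cp, hCpc, hypCp, hxCp⟩ := clopen_sep (Ne.symm hyp)
        obtain ⟨Cm, hCmc, hymCm, hxCm⟩ := clopen_sep (Ne.symm hym)
        obtain ⟨N₁, hN₁⟩ := C.tailp Cp (hCpc.isOpen.mem_nhds hypCp)
        obtain ⟨N₂, hN₂⟩ := C.tailm Cm (hCmc.isOpen.mem_nhds hymCm)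
        set B := ⋃ m ∈ Finset.Icc N₂ N₁, C.H m with hB
        have hBc : IsClopen B :=
          Set.Finite.isClopen_biUnion (Finset.Icc N₂ N₁).finite_toSet (fun m _ => C.clopen m)
        have hWnb : (Cp ∪ Cm ∪ B)ᶜ ∈ nhds x := by
          apply IsOpen.mem_nhds ((hCpc.union hCmc).union hBc).compl.isOpen
          intro hmem
          rcases hmem with (h | h) | h
          · exact hxCp h
          · exact hxCm h
          · rw [hB, Set.mem_iUnion₂] at h
            obtain ⟨m, _, hm⟩ := h
            exact hx m hm
        have : ContinuousAt id x := continuousAt_id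
        apply this.congr
        filter_upwards [hWnb] with z hz
        simp only [mem_compl_iff, mem_union, not_or] at hz
        have hzH : ∀ n, z ∉ C.H n := by
          intro n hn
          rcases le_or_gt N₁ n with h | h
          · exact hz.1.1 (hN₁ n h hn)
          rcases le_or_gt n N₂ with h' | h'
          · exact hz.1.2 (hN₂ n h' hn)
          · exact hz.2 (Set.mem_iUnion₂.mpr ⟨n, Finset.mem_Icc.mpr ⟨by omega, by omega⟩, hn⟩)
        exact (C.glueF_not _ hzH).symm

lemma invFun_continuous : Continuous d.invFun := d.symm.toFun_continuous

lemma perm_mem : d.perm ∈ EndsHomeo F := by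
  refine ⟨d.toFun_continuous, d.invFun_continuous, ?_⟩
  intro x
  show d.toFun x ∈ F ↔ x ∈ F
  by_cases h : ∃ n, x ∈ C.H n
  · obtain ⟨n, hn⟩ := h
    rw [show d.toFun x = d.θ n x from C.glueF_mem d.θ hn]
    exact d.hF n x hn
  · push_neg at h
    rw [show d.toFun x = x from C.glueF_not _ h]

end GlueData

end EndsPf

open TopologicalSpace Set
attribute [local instance] Classical.propDecidable

namespace EndsPf

variable {E : Type*} [TopologicalSpace E] [CompactSpace E]
  [TopologicalSpace.MetrizableSpace E] [TotallyDisconnectedSpace E]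
variable {F : Set E}

lemma Chain.psiMemF' (C : Chain F) : ∀ n, ∀ x ∈ C.H n, (C.psiG n x ∈ F ↔ x ∈ F) := by
  intro n x hx
  have h := C.psiMemF n (C.psiG n x) (C.psiMapsTo' n hx)
  rw [C.psiRinv n x hx] at h
  exact h.symm

/-- The canonical glue data induced by an index permutation. -/
noncomputable def canGD (C : Chain F) (π π' : ℤ → ℤ) (h1 : ∀ n, π' (π n) = n)
    (h2 : ∀ n, π (π' n) = n) (hb : ∀ n, |π n - n| ≤ 2 ∧ |π' n - n| ≤ 2) :
    GlueData F C where
  π := π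
  π' := π'
  θ := fun n x => C.psiF (π n) (C.psiG n x)
  θ' := fun n x => C.psiF (π' n) (C.psiG n x)
  hππ' := h1
  hπ'π := h2
  hmap := fun n x hx => C.psiMapsTo (π n) (C.psiMapsTo' n hx)
  hmap' := fun n x hx => C.psiMapsTo (π' n) (C.psiMapsTo' n hx)
  hinv := by
    intro n x hx
    have hu : C.psiG n x ∈ C.H 0 := C.psiMapsTo' n hx
    show C.psiF (π' (π n)) (C.psiG (π n) (C.psiF (π n) (C.psiG n x))) = x
    rw [C.psiLinv (π n) _ hu, h1 n, C.psiRinv n x hx]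
  hinv' := by
    intro n x hx
    have hu : C.psiG n x ∈ C.H 0 := C.psiMapsTo' n hx
    show C.psiF (π (π' n)) (C.psiG (π' n) (C.psiF (π' n) (C.psiG n x))) = x
    rw [C.psiLinv (π' n) _ hu, h2 n, C.psiRinv n x hx]
  hcont := fun n => (C.psiCont (π n)).comp (C.psiCont' n) (C.psiMapsTo' n)
  hcont' := fun n => (C.psiCont (π' n)).comp (C.psiCont' n) (C.psiMapsTo' n)
  hF := by
    intro n x hx
    exact (C.psiMemF (π n) _ (C.psiMapsTo' n hx)).trans (C.psiMemF' n x hx)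
  hbd := ⟨2, by omega, hb⟩

lemma canGD_step (C : Chain F) (π π' : ℤ → ℤ) (h1 h2 hb) (m : ℤ) {w : E} (hw : w ∈ C.H 0) :
    (canGD C π π' h1 h2 hb).perm (C.psiF m w) = C.psiF (π m) w := by
  rw [GlueData.perm_apply_mem _ (C.psiMapsTo m hw)]
  show C.psiF (π m) (C.psiG m (C.psiF m w)) = _
  rw [C.psiLinv m w hw]

lemma canGD_inv_step (C : Chain F) (π π' : ℤ → ℤ) (h1 h2 hb) (m : ℤ) {w : E} (hw : w ∈ C.H 0) :
    (canGD C π π' h1 h2 hb).perm⁻¹ (C.psiF m w) = C.psiF (π' m) w := by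
  rw [GlueData.perm_inv_eq, GlueData.perm_apply_mem _ (C.psiMapsTo m hw)]
  show C.psiF (π' m) (C.psiG m (C.psiF m w)) = _
  rw [C.psiLinv m w hw]

lemma canGD_not (C : Chain F) (π π' : ℤ → ℤ) (h1 h2 hb) {x : E} (hx : ∀ n, x ∉ C.H n) :
    (canGD C π π' h1 h2 hb).perm x = x := GlueData.perm_apply_not _ hx

lemma canGD_inv_not (C : Chain F) (π π' : ℤ → ℤ) (h1 h2 hb) {x : E} (hx : ∀ n, x ∉ C.H n) :
    (canGD C π π' h1 h2 hb).perm⁻¹ x = x := by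
  rw [GlueData.perm_inv_eq]; exact GlueData.perm_apply_not _ hx

/-- The pairing `2n ↔ 2n+1`. -/
def t0 : ℤ → ℤ := fun n => if n % 2 = 0 then n + 1 else n - 1

lemma t0_invol : ∀ n, t0 (t0 n) = n := by
  intro n
  unfold t0
  split_ifs with h1 h2 h3 <;> omega

lemma t0_bd : ∀ n : ℤ, |t0 n - n| ≤ 2 ∧ |t0 n - n| ≤ 2 := by
  intro n
  constructor <;> (unfold t0; split_ifs <;> (rw [abs_le]; omega))

/-- The glued pairing involution `τ`. -/
noncomputable def tauGD (C : Chain F) : GlueData F C := canGD C t0 t0 t0_invol t0_invol t0_bd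

lemma shift_bd : ∀ n : ℤ, |(n + 1) - n| ≤ 2 ∧ |(n - 1) - n| ≤ 2 := by
  intro n; constructor <;> (rw [abs_le]; omega)

lemma shift_h1 : ∀ n : ℤ, (fun n : ℤ => n - 1) ((fun n : ℤ => n + 1) n) = n := fun n => by
  show n + 1 - 1 = n; omega

lemma shift_h2 : ∀ n : ℤ, (fun n : ℤ => n + 1) ((fun n : ℤ => n - 1) n) = n := fun n => by
  show n - 1 + 1 = n; omega

/-- The glued shift `σ`. -/
noncomputable def sigGD (C : Chain F) : GlueData F C :=
  canGD C (fun n => n + 1) (fun n => n - 1) shift_h1 shift_h2 (fun n => shift_bd n)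

lemma tau_step (C : Chain F) (m : ℤ) {w : E} (hw : w ∈ C.H 0) :
    (tauGD C).perm (C.psiF m w) = C.psiF (t0 m) w :=
  canGD_step C t0 t0 t0_invol t0_invol t0_bd m hw

lemma tau_not (C : Chain F) {x : E} (hx : ∀ n, x ∉ C.H n) : (tauGD C).perm x = x :=
  canGD_not C t0 t0 t0_invol t0_invol t0_bd hx

lemma sig_step (C : Chain F) (m : ℤ) {w : E} (hw : w ∈ C.H 0) :
    (sigGD C).perm (C.psiF m w) = C.psiF (m + 1) w :=
  canGD_step C _ _ shift_h1 shift_h2 (fun n => shift_bd n) m hw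

lemma sig_inv_step (C : Chain F) (m : ℤ) {w : E} (hw : w ∈ C.H 0) :
    (sigGD C).perm⁻¹ (C.psiF m w) = C.psiF (m - 1) w :=
  canGD_inv_step C _ _ shift_h1 shift_h2 (fun n => shift_bd n) m hw

lemma sig_not (C : Chain F) {x : E} (hx : ∀ n, x ∉ C.H n) : (sigGD C).perm x = x :=
  canGD_not C _ _ shift_h1 shift_h2 (fun n => shift_bd n) hx

lemma sig_inv_not (C : Chain F) {x : E} (hx : ∀ n, x ∉ C.H n) : (sigGD C).perm⁻¹ x = x :=
  canGD_inv_not C _ _ shift_h1 shift_h2 (fun n => shift_bd n) hx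

lemma tau_inv (C : Chain F) : (tauGD C).perm⁻¹ = (tauGD C).perm := rfl

lemma tau_sq (C : Chain F) : (tauGD C).perm * (tauGD C).perm = 1 := by
  have h : (tauGD C).perm * (tauGD C).perm = (tauGD C).perm * (tauGD C).perm⁻¹ := by
    rw [tau_inv]
  rw [h, mul_inv_cancel]

lemma tau_ne_one (C : Chain F) (hne : (C.H 0).Nonempty) : (tauGD C).perm ≠ 1 := by
  obtain ⟨x, hx⟩ := hne
  intro h
  have h1 : (tauGD C).perm x = C.psiF (t0 0) (C.psiG 0 x) := GlueData.perm_apply_mem _ hx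
  have h2 : (tauGD C).perm x ∈ C.H (t0 0) := by
    rw [h1]; exact C.psiMapsTo _ (C.psiMapsTo' 0 hx)
  rw [h] at h2
  simp only [Equiv.Perm.coe_one, id_eq] at h2
  have : (0 : ℤ) = t0 0 := C.mem_unique hx h2
  unfold t0 at this
  simp at this

/-- κ := τ σ τ σ⁻¹ shifts even indices by -2 and odd ones by +2. -/
noncomputable def kappa (C : Chain F) : Equiv.Perm E :=
  (tauGD C).perm * ((sigGD C).perm * (tauGD C).perm * (sigGD C).perm⁻¹)

def kIdx : ℤ → ℤ := fun n => if n % 2 = 0 then n - 2 else n + 2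
def kIdx' : ℤ → ℤ := fun n => if n % 2 = 0 then n + 2 else n - 2

lemma kappa_step (C : Chain F) (m : ℤ) {w : E} (hw : w ∈ C.H 0) :
    kappa C (C.psiF m w) = C.psiF (kIdx m) w := by
  unfold kappa
  simp only [Equiv.Perm.mul_apply]
  rw [sig_inv_step C m hw, tau_step C (m - 1) hw, sig_step C (t0 (m - 1)) hw,
    tau_step C (t0 (m - 1) + 1) hw]
  congr 1
  unfold t0 kIdx
  split_ifs <;> omega

lemma kappa_not (C : Chain F) {x : E} (hx : ∀ n, x ∉ C.H n) : kappa C x = x := by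
  unfold kappa
  simp only [Equiv.Perm.mul_apply]
  rw [sig_inv_not C hx, tau_not C hx, sig_not C hx, tau_not C hx]

lemma kIdx_kIdx' : ∀ m : ℤ, kIdx (kIdx' m) = m := by
  intro m; unfold kIdx kIdx'; split_ifs <;> omega

lemma kappa_inv_step (C : Chain F) (m : ℤ) {w : E} (hw : w ∈ C.H 0) :
    (kappa C)⁻¹ (C.psiF m w) = C.psiF (kIdx' m) w := by
  have h := kappa_step C (kIdx' m) hw
  rw [kIdx_kIdx'] at h
  rw [← h, Equiv.Perm.inv_apply_self]

lemma kappa_inv_not (C : Chain F) {x : E} (hx : ∀ n, x ∉ C.H n) : (kappa C)⁻¹ x = x := by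
  have h := kappa_not C hx
  nth_rewrite 1 [← h]
  rw [Equiv.Perm.inv_apply_self]

/-- A permutation supported on a set maps it onto itself. -/
lemma supp_mapsTo {q : Equiv.Perm E} {A : Set E} (hsupp : ∀ x ∉ A, q x = x) :
    Set.MapsTo (⇑q) A A := by
  intro x hx
  by_contra h
  have h1 : q (q x) = q x := hsupp (q x) h
  have h2 : q x = x := q.injective h1
  rw [h2] at h
  exact h hx

lemma supp_inv {q : Equiv.Perm E} {A : Set E} (hsupp : ∀ x ∉ A, q x = x) :
    ∀ x ∉ A, q⁻¹ x = x := by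
  intro x hx
  have h := hsupp x hx
  nth_rewrite 1 [← h]
  rw [Equiv.Perm.inv_apply_self]

/-- Glue data for the infinite product `Γ = ∏_{n even ≥ 0} ψₙ q ψₙ⁻¹`. -/
noncomputable def gammaGD (C : Chain F) (q : Equiv.Perm E) (hq : q ∈ EndsHomeo F)
    (hsupp : ∀ x ∉ C.H 0, q x = x) : GlueData F C where
  π := id
  π' := id
  θ := fun n x => if 0 ≤ n ∧ n % 2 = 0 then C.psiF n (q (C.psiG n x)) else x
  θ' := fun n x => if 0 ≤ n ∧ n % 2 = 0 then C.psiF n (q⁻¹ (C.psiG n x)) else x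
  hππ' := fun _ => rfl
  hπ'π := fun _ => rfl
  hmap := by
    intro n x hx
    simp only [id_eq]
    split_ifs with h
    · exact C.psiMapsTo n (supp_mapsTo hsupp (C.psiMapsTo' n hx))
    · exact hx
  hmap' := by
    intro n x hx
    simp only [id_eq]
    split_ifs with h
    · have : Set.MapsTo (⇑q⁻¹) (C.H 0) (C.H 0) := supp_mapsTo (supp_inv hsupp)
      exact C.psiMapsTo n (this (C.psiMapsTo' n hx))
    · exact hx
  hinv := by
    intro n x hx
    simp only [id_eq]
    split_ifs with h
    · have hu : q (C.psiG n x) ∈ C.H 0 := supp_mapsTo hsupp (C.psiMapsTo' n hx)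
      rw [C.psiLinv n _ hu, Equiv.Perm.inv_apply_self, C.psiRinv n x hx]
    · rfl
  hinv' := by
    intro n x hx
    simp only [id_eq]
    split_ifs with h
    · have hu : q⁻¹ (C.psiG n x) ∈ C.H 0 :=
        supp_mapsTo (supp_inv hsupp) (C.psiMapsTo' n hx)
      rw [C.psiLinv n _ hu, Equiv.Perm.apply_inv_self, C.psiRinv n x hx]
    · rfl
  hcont := by
    intro n
    by_cases h : 0 ≤ n ∧ n % 2 = 0
    · simp only [if_pos h]
      exact (C.psiCont n).comp (hq.1.comp_continuousOn (C.psiCont' n))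
        (fun x hx => supp_mapsTo hsupp (C.psiMapsTo' n hx))
    · simp only [if_neg h]
      exact continuousOn_id
  hcont' := by
    intro n
    by_cases h : 0 ≤ n ∧ n % 2 = 0
    · simp only [if_pos h]
      exact (C.psiCont n).comp (hq.2.1.comp_continuousOn (C.psiCont' n))
        (fun x hx => supp_mapsTo (supp_inv hsupp) (C.psiMapsTo' n hx))
    · simp only [if_neg h]
      exact continuousOn_id
  hF := by
    intro n x hx
    show (if 0 ≤ n ∧ n % 2 = 0 then C.psiF n (q (C.psiG n x)) else x) ∈ F ↔ x ∈ F
    split_ifs with h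
    · have hu : C.psiG n x ∈ C.H 0 := C.psiMapsTo' n hx
      have h1 := C.psiMemF n (q (C.psiG n x)) (supp_mapsTo hsupp hu)
      have h2 : (q (C.psiG n x) ∈ F ↔ C.psiG n x ∈ F) := hq.2.2 _
      exact h1.trans (h2.trans (C.psiMemF' n x hx))
    · rfl
  hbd := ⟨2, by omega, fun n => by constructor <;> (simp only [id_eq]; rw [abs_le]; omega)⟩



end EndsPf

open TopologicalSpace Set
attribute [local instance] Classical.propDecidable

namespace EndsPf

variable {E : Type*} [TopologicalSpace E] [CompactSpace E]
  [TopologicalSpace.MetrizableSpace E] [TotallyDisconnectedSpace E]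
variable {F : Set E}

lemma kIdx'_kIdx : ∀ n : ℤ, kIdx' (kIdx n) = n := by
  intro n; unfold kIdx kIdx'; split_ifs <;> omega

lemma kIdx_cond (n : ℤ) :
    (0 ≤ kIdx n ∧ kIdx n % 2 = 0) ↔ ((0 ≤ n ∧ n % 2 = 0) ∧ n ≠ 0) := by
  unfold kIdx; split_ifs <;> omega

lemma gamma_step (C : Chain F) (q : Equiv.Perm E) (hq : q ∈ EndsHomeo F)
    (hsupp : ∀ x ∉ C.H 0, q x = x) (m : ℤ) {w : E} (hw : w ∈ C.H 0) :
    (gammaGD C q hq hsupp).perm (C.psiF m w) =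
      if 0 ≤ m ∧ m % 2 = 0 then C.psiF m (q w) else C.psiF m w := by
  rw [GlueData.perm_apply_mem _ (C.psiMapsTo m hw)]
  show (if 0 ≤ m ∧ m % 2 = 0 then C.psiF m (q (C.psiG m (C.psiF m w))) else C.psiF m w) = _
  split_ifs with h
  · rw [C.psiLinv m w hw]
  · rfl

lemma gamma_inv_step (C : Chain F) (q : Equiv.Perm E) (hq : q ∈ EndsHomeo F)
    (hsupp : ∀ x ∉ C.H 0, q x = x) (m : ℤ) {w : E} (hw : w ∈ C.H 0) :
    (gammaGD C q hq hsupp).perm⁻¹ (C.psiF m w) =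
      if 0 ≤ m ∧ m % 2 = 0 then C.psiF m (q⁻¹ w) else C.psiF m w := by
  rw [GlueData.perm_inv_eq, GlueData.perm_apply_mem _ (C.psiMapsTo m hw)]
  show (if 0 ≤ m ∧ m % 2 = 0 then C.psiF m (q⁻¹ (C.psiG m (C.psiF m w))) else C.psiF m w) = _
  split_ifs with h
  · rw [C.psiLinv m w hw]
  · rfl

lemma gamma_not (C : Chain F) (q : Equiv.Perm E) (hq : q ∈ EndsHomeo F)
    (hsupp : ∀ x ∉ C.H 0, q x = x) {x : E} (hx : ∀ n, x ∉ C.H n) :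
    (gammaGD C q hq hsupp).perm x = x := GlueData.perm_apply_not _ hx

lemma gamma_inv_not (C : Chain F) (q : Equiv.Perm E) (hq : q ∈ EndsHomeo F)
    (hsupp : ∀ x ∉ C.H 0, q x = x) {x : E} (hx : ∀ n, x ∉ C.H n) :
    (gammaGD C q hq hsupp).perm⁻¹ x = x := by
  rw [GlueData.perm_inv_eq]; exact GlueData.perm_apply_not _ hx

/-- `τ` as an element of the group `Homeo(E,F)`. -/
noncomputable def tauEl (C : Chain F) : ↥(EndsHomeo F) := ⟨(tauGD C).perm, (tauGD C).perm_mem⟩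

/-- Every homeomorphism supported on `H 0` lies in the normal closure of `τ`. -/
theorem key_supported (C : Chain F) {q : Equiv.Perm E} (hq : q ∈ EndsHomeo F)
    (hsupp : ∀ x ∉ C.H 0, q x = x) :
    (⟨q, hq⟩ : ↥(EndsHomeo F)) ∈ Subgroup.normalClosure {tauEl C} := by
  set N := Subgroup.normalClosure {tauEl C} with hNdef
  have hNnormal : N.Normal := Subgroup.normalClosure_normal
  have hτ : tauEl C ∈ N := Subgroup.subset_normalClosure rfl
  set sig : ↥(EndsHomeo F) := ⟨(sigGD C).perm, (sigGD C).perm_mem⟩ with hsig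
  set kap : ↥(EndsHomeo F) := tauEl C * (sig * tauEl C * sig⁻¹) with hkap
  have hκ : kap ∈ N := by
    apply mul_mem hτ
    exact hNnormal.conj_mem _ hτ sig
  set Gam : ↥(EndsHomeo F) :=
    ⟨(gammaGD C q hq hsupp).perm, (gammaGD C q hq hsupp).perm_mem⟩ with hGam
  have hkapcoe : (kap : Equiv.Perm E) = kappa C := rfl
  have hmain : (⟨q, hq⟩ : ↥(EndsHomeo F)) = Gam * kap⁻¹ * Gam⁻¹ * kap := by
    apply Subtype.ext
    apply Equiv.ext
    intro x
    have hcoe : ((Gam * kap⁻¹ * Gam⁻¹ * kap : ↥(EndsHomeo F)) : Equiv.Perm E) x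
        = (gammaGD C q hq hsupp).perm ((kappa C)⁻¹
            ((gammaGD C q hq hsupp).perm⁻¹ (kappa C x))) := rfl
    rw [hcoe]
    by_cases hx : ∃ n, x ∈ C.H n
    · obtain ⟨n, hn⟩ := hx
      set u := C.psiG n x with hu
      have huH : u ∈ C.H 0 := C.psiMapsTo' n hn
      have hxu : x = C.psiF n u := (C.psiRinv n x hn).symm
      rw [hxu, kappa_step C n huH]
      rw [gamma_inv_step C q hq hsupp (kIdx n) huH]
      by_cases hP : 0 ≤ n ∧ n % 2 = 0
      · by_cases h0 : n = 0
        · subst h0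
          have hcond : ¬(0 ≤ kIdx 0 ∧ kIdx 0 % 2 = 0) := by
            rw [kIdx_cond]; simp
          rw [if_neg hcond, kappa_inv_step C (kIdx 0) huH, kIdx'_kIdx,
            gamma_step C q hq hsupp 0 huH, if_pos hP]
          have hux : u = x := by rw [hu, C.psi0' x hn]
          have hq0 : q u ∈ C.H 0 := supp_mapsTo hsupp huH
          rw [C.psi0 (q u) hq0, hux]
          show q (C.psiF 0 x) = q x
          rw [C.psi0 x hn]
        · have hcond : 0 ≤ kIdx n ∧ kIdx n % 2 = 0 := (kIdx_cond n).mpr ⟨hP, h0⟩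
          have hqinv : q⁻¹ u ∈ C.H 0 := supp_mapsTo (supp_inv hsupp) huH
          rw [if_pos hcond, kappa_inv_step C (kIdx n) hqinv, kIdx'_kIdx,
            gamma_step C q hq hsupp n hqinv, if_pos hP, Equiv.Perm.apply_inv_self]
          have hxnot0 : x ∉ C.H 0 := by
            intro hmem
            exact h0 (C.mem_unique hn hmem)
          rw [← hxu, hsupp x hxnot0]
      · have hn0 : n ≠ 0 := by
          intro h; subst h; exact hP ⟨le_refl 0, rfl⟩
        have hcond : ¬(0 ≤ kIdx n ∧ kIdx n % 2 = 0) := by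
          rw [kIdx_cond]; tauto
        rw [if_neg hcond, kappa_inv_step C (kIdx n) huH, kIdx'_kIdx,
          gamma_step C q hq hsupp n huH, if_neg hP]
        have hxnot0 : x ∉ C.H 0 := by
          intro hmem
          exact hn0 (C.mem_unique hn hmem)
        rw [← hxu, hsupp x hxnot0]
    · push_neg at hx
      rw [kappa_not C hx, gamma_inv_not C q hq hsupp hx, kappa_inv_not C hx,
        gamma_not C q hq hsupp hx]
      have hxnot0 : x ∉ C.H 0 := hx 0
      rw [hsupp x hxnot0]
  rw [hmain]
  have h1 : Gam * kap⁻¹ * Gam⁻¹ ∈ N := by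
    have := hNnormal.conj_mem _ (inv_mem hκ) Gam
    simpa [mul_assoc] using this
  exact mul_mem h1 hκ

end EndsPf

open TopologicalSpace Set
attribute [local instance] Classical.propDecidable

namespace EndsPf

variable {E : Type*} [TopologicalSpace E] [Nonempty E] [CompactSpace E]
  [TopologicalSpace.MetrizableSpace E] [TotallyDisconnectedSpace E]
variable {F : Set E}

/-- Output of one step of the shrinking construction. -/
structure StepOut (F : Set E) (x : E) (K U t : Set E) where
  A : Set E
  U' : Set E
  hA : IsClopen A
  hAU : A ⊆ U
  hxA : x ∉ A
  pph : Nonempty (PPH F K A)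
  hU' : IsClopen U'
  hxU' : x ∈ U'
  hsub : U' ⊆ (U \ A) ∩ t

lemma shrinking_copies (hss : SelfSimilarPair F) (e : ↥(MaxSet F) ≃ₜ (ℕ → Bool))
    {x : E} (hx : x ∈ MaxSet F) {Q : Set E} (hQ : IsClopen Q) (hxQ : x ∈ Q)
    {K : Set E} (hK : IsClopen K) :
    ∃ A : ℕ → Set E, (∀ k, IsClopen (A k)) ∧ (∀ k, A k ⊆ Q) ∧ (∀ k, x ∉ A k) ∧
      (∀ k l, k ≠ l → Disjoint (A k) (A l)) ∧
      (∀ U ∈ nhds x, ∃ N : ℕ, ∀ k ≥ N, A k ⊆ U) ∧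
      (∀ k, Nonempty (PPH F K (A k))) := by
  obtain ⟨b, hb⟩ := (nhds x).exists_antitone_basis
  have hbmem : ∀ k, b k ∈ nhds x := fun k => hb.toHasBasis.mem_of_mem trivial
  have step : ∀ (U : Set E), IsClopen U → x ∈ U → ∀ k : ℕ, StepOut F x K U (b k) := by
    intro U hU hxU k
    apply Classical.choice
    obtain ⟨A, hAc, hAU, hxA, hpph⟩ := copy_avoiding hss e hx hU hxU K hK
    have hnb : (U \ A) ∩ b k ∈ nhds x :=
      Filter.inter_mem (((hU.diff hAc).isOpen).mem_nhds ⟨hxU, hxA⟩) (hbmem k)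
    obtain ⟨U', hU'c, hxU', hU'sub⟩ := clopen_nbhd_of_mem_nhds hnb
    exact ⟨⟨A, U', hAc, hAU, hxA, hpph, hU'c, hxU', hU'sub⟩⟩
  -- the recursively defined nested neighbourhoods
  let seqU : ℕ → {U : Set E // IsClopen U ∧ x ∈ U} := fun k =>
    Nat.rec ⟨Q, hQ, hxQ⟩ (fun k p =>
      ⟨(step p.1 p.2.1 p.2.2 k).U', (step p.1 p.2.1 p.2.2 k).hU',
        (step p.1 p.2.1 p.2.2 k).hxU'⟩) k
  let st : ∀ k : ℕ, StepOut F x K (seqU k).1 (b k) := fun k =>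
    step (seqU k).1 (seqU k).2.1 (seqU k).2.2 k
  have hUsucc : ∀ k, (seqU (k + 1)).1 = (st k).U' := fun k => rfl
  have hUsub : ∀ k, (seqU (k + 1)).1 ⊆ ((seqU k).1 \ (st k).A) ∩ b k := fun k => (st k).hsub
  have hUmono : ∀ k l, k ≤ l → (seqU l).1 ⊆ (seqU k).1 := by
    intro k l hkl
    induction l with
    | zero => rw [Nat.le_zero.mp hkl]
    | succ n ih =>
      rcases Nat.lt_or_ge k (n + 1) with h | h
      · exact ((hUsub n).trans (inter_subset_left.trans diff_subset)).trans
          (ih (Nat.lt_succ_iff.mp h))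
      · rw [Nat.le_antisymm hkl h]
  have hU0 : (seqU 0).1 = Q := rfl
  refine ⟨fun k => (st k).A, fun k => (st k).hA, ?_, fun k => (st k).hxA, ?_, ?_,
    fun k => (st k).pph⟩
  · intro k
    exact ((st k).hAU).trans (by rw [← hU0]; exact hUmono 0 k (Nat.zero_le k))
  · -- pairwise disjoint
    have key : ∀ k l, k < l → Disjoint ((st k).A) ((st l).A) := by
      intro k l hkl
      have h1 : (st l).A ⊆ (seqU l).1 := (st l).hAU
      have h2 : (seqU l).1 ⊆ (seqU (k + 1)).1 := hUmono (k + 1) l hkl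
      have h3 : (seqU (k + 1)).1 ⊆ (seqU k).1 \ (st k).A :=
        (hUsub k).trans inter_subset_left
      rw [disjoint_comm, Set.disjoint_left]
      intro z hz
      exact (h3 (h2 (h1 hz))).2
    intro k l hkl
    rcases Nat.lt_or_ge k l with h | h
    · exact key k l h
    · exact (key l k (Nat.lt_of_le_of_ne h (Ne.symm hkl))).symm
  · -- tail
    intro U hU
    obtain ⟨i, _, hbi⟩ := hb.toHasBasis.mem_iff.mp hU
    refine ⟨i + 1, fun k hk => ?_⟩
    have h1 : (st k).A ⊆ (seqU k).1 := (st k).hAU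
    obtain ⟨k', rfl⟩ : ∃ k', k = k' + 1 := ⟨k - 1, by omega⟩
    have h2 : (seqU (k' + 1)).1 ⊆ b k' := (hUsub k').trans inter_subset_right
    have h3 : b k' ⊆ b i := hb.antitone (by omega)
    exact h1.trans (h2.trans (h3.trans hbi))

end EndsPf

namespace EndsPf

variable {E : Type*} [TopologicalSpace E] [Nonempty E] [CompactSpace E]
  [TopologicalSpace.MetrizableSpace E] [TotallyDisconnectedSpace E]
variable {F : Set E}

lemma chain_construct (hss : SelfSimilarPair F) (e : ↥(MaxSet F) ≃ₜ (ℕ → Bool))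
    {y0 y1 : E} (h0 : y0 ∈ MaxSet F) (h1 : y1 ∈ MaxSet F)
    {Q0 Q1 : Set E} (hQ0 : IsClopen Q0) (hQ1 : IsClopen Q1)
    (hy0 : y0 ∈ Q0) (hy1 : y1 ∈ Q1) (hdisj : Disjoint Q0 Q1) :
    ∃ C : Chain F, C.H 0 = (Q0 ∪ Q1)ᶜ := by
  set HH := (Q0 ∪ Q1)ᶜ with hHHdef
  have hHHc : IsClopen HH := (hQ0.union hQ1).compl
  obtain ⟨Ap, hApc, hApQ, hApx, hApd, hAptail, hAppph⟩ :=
    shrinking_copies hss e h0 hQ0 hy0 hHHc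
  obtain ⟨Am, hAmc, hAmQ, hAmx, hAmd, hAmtail, hAmpph⟩ :=
    shrinking_copies hss e h1 hQ1 hy1 hHHc
  set pp : ∀ k : ℕ, PPH F HH (Ap k) := fun k => Classical.choice (hAppph k) with hpp
  set pm : ∀ k : ℕ, PPH F HH (Am k) := fun k => Classical.choice (hAmpph k) with hpm
  set H : ℤ → Set E := fun n =>
    if 0 < n then Ap (n - 1).toNat else if n < 0 then Am (-n - 1).toNat else HH with hHdef
  have Hpos : ∀ n : ℤ, 0 < n → H n = Ap (n - 1).toNat := fun n h => by
    simp only [hHdef, if_pos h]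
  have Hneg : ∀ n : ℤ, n < 0 → H n = Am (-n - 1).toNat := fun n h => by
    simp only [hHdef, if_neg (by omega : ¬0 < n), if_pos h]
  have H0 : H 0 = HH := by simp [hHdef]
  have dApHH : ∀ k, Disjoint (Ap k) HH := by
    intro k
    rw [Set.disjoint_left]
    intro z hz hzH
    exact hzH (Or.inl (hApQ k hz))
  have dAmHH : ∀ k, Disjoint (Am k) HH := by
    intro k
    rw [Set.disjoint_left]
    intro z hz hzH
    exact hzH (Or.inr (hAmQ k hz))
  have dApAm : ∀ k l, Disjoint (Ap k) (Am l) := by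
    intro k l
    exact Set.disjoint_of_subset (hApQ k) (hAmQ l) hdisj
  set psiF : ℤ → E → E := fun n =>
    if 0 < n then (pp (n - 1).toNat).f else if n < 0 then (pm (-n - 1).toNat).f else id
    with hpsiF
  set psiG : ℤ → E → E := fun n =>
    if 0 < n then (pp (n - 1).toNat).g else if n < 0 then (pm (-n - 1).toNat).g else id
    with hpsiG
  have psiFpos : ∀ n : ℤ, 0 < n → psiF n = (pp (n - 1).toNat).f := fun n h => by
    simp only [hpsiF, if_pos h]
  have psiFneg : ∀ n : ℤ, n < 0 → psiF n = (pm (-n - 1).toNat).f := fun n h => by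
    simp only [hpsiF, if_neg (by omega : ¬0 < n), if_pos h]
  have psiF0 : psiF 0 = id := by simp [hpsiF]
  have psiGpos : ∀ n : ℤ, 0 < n → psiG n = (pp (n - 1).toNat).g := fun n h => by
    simp only [hpsiG, if_pos h]
  have psiGneg : ∀ n : ℤ, n < 0 → psiG n = (pm (-n - 1).toNat).g := fun n h => by
    simp only [hpsiG, if_neg (by omega : ¬0 < n), if_pos h]
  have psiG0 : psiG 0 = id := by simp [hpsiG]
  have hy01 : y0 ≠ y1 := by
    intro h
    exact Set.disjoint_left.mp hdisj hy0 (h ▸ hy1)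
  refine ⟨⟨H, ?_, ?_, y0, y1, hy01, ?_, ?_, ?_, ?_, psiF, psiG, ?_, ?_, ?_, ?_, ?_, ?_, ?_, ?_⟩,
    H0⟩
  · -- clopen
    intro n
    rcases lt_trichotomy 0 n with h | h | h
    · rw [Hpos n h]; exact hApc _
    · rw [← h, H0]; exact hHHc
    · rw [Hneg n h]; exact hAmc _
  · -- disjoint
    intro m n hmn
    rcases lt_trichotomy 0 m with h | h | h <;> rcases lt_trichotomy 0 n with h' | h' | h'
    · rw [Hpos m h, Hpos n h']
      exact hApd _ _ (by omega)
    · rw [Hpos m h, ← h', H0]; exact dApHH _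
    · rw [Hpos m h, Hneg n h']; exact dApAm _ _
    · rw [← h, H0, Hpos n h']; exact (dApHH _).symm
    · omega
    · rw [← h, H0, Hneg n h']; exact (dAmHH _).symm
    · rw [Hneg m h, Hpos n h']; exact (dApAm _ _).symm
    · rw [Hneg m h, ← h', H0]; exact dAmHH _
    · rw [Hneg m h, Hneg n h']
      exact hAmd _ _ (by omega)
  · -- y0 not in H n
    intro n
    rcases lt_trichotomy 0 n with h | h | h
    · rw [Hpos n h]; exact hApx _
    · rw [← h, H0]
      exact fun hmem => hmem (Or.inl hy0)
    · rw [Hneg n h]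
      intro hmem
      exact Set.disjoint_left.mp hdisj hy0 (hAmQ _ hmem)
  · -- y1 not in H n
    intro n
    rcases lt_trichotomy 0 n with h | h | h
    · rw [Hpos n h]
      intro hmem
      exact Set.disjoint_left.mp hdisj (hApQ _ hmem) hy1
    · rw [← h, H0]
      exact fun hmem => hmem (Or.inr hy1)
    · rw [Hneg n h]; exact hAmx _
  · -- tailp
    intro U hU
    obtain ⟨N, hN⟩ := hAptail U hU
    refine ⟨(N : ℤ) + 1, fun n hn => ?_⟩
    rw [Hpos n (by omega)]
    exact hN _ (by omega)
  · -- tailm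
    intro U hU
    obtain ⟨N, hN⟩ := hAmtail U hU
    refine ⟨-((N : ℤ) + 1), fun n hn => ?_⟩
    rw [Hneg n (by omega)]
    exact hN _ (by omega)
  · -- psi0
    intro x hx
    rw [psiF0]; rfl
  · -- psiMapsTo
    intro n
    rw [H0]
    rcases lt_trichotomy 0 n with h | h | h
    · rw [Hpos n h, psiFpos n h]; exact (pp _).mapsTo
    · rw [← h, H0, psiF0]; exact fun x hx => hx
    · rw [Hneg n h, psiFneg n h]; exact (pm _).mapsTo
  · -- psiMapsTo'
    intro n
    rw [H0]
    rcases lt_trichotomy 0 n with h | h | h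
    · rw [Hpos n h, psiGpos n h]; exact (pp _).mapsTo'
    · rw [← h, H0, psiG0]; exact fun x hx => hx
    · rw [Hneg n h, psiGneg n h]; exact (pm _).mapsTo'
  · -- psiLinv
    intro n x hx
    rw [H0] at hx
    rcases lt_trichotomy 0 n with h | h | h
    · rw [psiFpos n h, psiGpos n h]; exact (pp _).linv x hx
    · rw [← h, psiF0, psiG0]; rfl
    · rw [psiFneg n h, psiGneg n h]; exact (pm _).linv x hx
  · -- psiRinv
    intro n x hx
    rcases lt_trichotomy 0 n with h | h | h
    · rw [Hpos n h] at hx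
      rw [psiFpos n h, psiGpos n h]; exact (pp _).rinv x hx
    · rw [← h, psiF0, psiG0]; rfl
    · rw [Hneg n h] at hx
      rw [psiFneg n h, psiGneg n h]; exact (pm _).rinv x hx
  · -- psiCont
    intro n
    rw [H0]
    rcases lt_trichotomy 0 n with h | h | h
    · rw [psiFpos n h]; exact (pp _).cont
    · rw [← h, psiF0]; exact continuousOn_id
    · rw [psiFneg n h]; exact (pm _).cont
  · -- psiCont'
    intro n
    rcases lt_trichotomy 0 n with h | h | h
    · rw [Hpos n h, psiGpos n h]; exact (pp _).cont'
    · rw [← h, H0, psiG0]; exact continuousOn_id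
    · rw [Hneg n h, psiGneg n h]; exact (pm _).cont'
  · -- psiMemF
    intro n x hx
    rw [H0] at hx
    rcases lt_trichotomy 0 n with h | h | h
    · rw [psiFpos n h]; exact (pp _).memF x hx
    · rw [← h, psiF0]; rfl
    · rw [psiFneg n h]; exact (pm _).memF x hx

end EndsPf

open TopologicalSpace Set
attribute [local instance] Classical.propDecidable

namespace EndsPf

variable {E : Type*} [TopologicalSpace E] [Nonempty E] [CompactSpace E]
  [TopologicalSpace.MetrizableSpace E] [TotallyDisconnectedSpace E]
variable {F : Set E}

lemma swapPerm_image {A B : Set E} (p : PPH F A B) (hd : Disjoint A B) :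
    ⇑(swapPerm p hd) '' A = B := by
  apply Subset.antisymm
  · rintro _ ⟨x, hx, rfl⟩
    rw [swapPerm_apply_left p hd hx]
    exact p.mapsTo hx
  · intro y hy
    refine ⟨p.g y, p.mapsTo' hy, ?_⟩
    rw [swapPerm_apply_left p hd (p.mapsTo' hy), p.rinv y hy]

section Frag

variable (C : Chain F) {P : Set E}

/-- Criterion (a): anything fixing `P` pointwise is in the normal closure of `τ`. -/
lemma memN_a (hC0 : C.H 0 = Pᶜ) {q : Equiv.Perm E} (hq : q ∈ EndsHomeo F)
    (hfix : ∀ x ∈ P, q x = x) :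
    (⟨q, hq⟩ : ↥(EndsHomeo F)) ∈ Subgroup.normalClosure {tauEl C} := by
  apply key_supported
  intro x hx
  rw [hC0] at hx
  exact hfix x (by simpa using hx)

/-- Criterion (b): anything fixing `h '' P` pointwise is in the normal closure of `τ`. -/
lemma memN_b (hC0 : C.H 0 = Pᶜ) {q h : Equiv.Perm E} (hq : q ∈ EndsHomeo F) (hh : h ∈ EndsHomeo F)
    (hfix : ∀ x ∈ ⇑h '' P, q x = x) :
    (⟨q, hq⟩ : ↥(EndsHomeo F)) ∈ Subgroup.normalClosure {tauEl C} := by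
  set N := Subgroup.normalClosure {tauEl C} with hN
  have hq' : h⁻¹ * q * h ∈ EndsHomeo F := mul_mem (mul_mem (inv_mem hh) hq) hh
  have hq'fix : ∀ x ∈ P, (h⁻¹ * q * h) x = x := by
    intro x hx
    have h1 : q (h x) = h x := hfix (h x) ⟨x, hx, rfl⟩
    show h⁻¹ (q (h x)) = x
    rw [h1, Equiv.Perm.inv_apply_self]
  have hmem : (⟨h⁻¹ * q * h, hq'⟩ : ↥(EndsHomeo F)) ∈ N := memN_a C hC0 hq' hq'fix
  have heq : (⟨q, hq⟩ : ↥(EndsHomeo F)) =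
      (⟨h, hh⟩ : ↥(EndsHomeo F)) * ⟨h⁻¹ * q * h, hq'⟩ * (⟨h, hh⟩ : ↥(EndsHomeo F))⁻¹ := by
    apply Subtype.ext
    show q = h * (h⁻¹ * q * h) * h⁻¹
    group
  rw [heq]
  exact (Subgroup.normalClosure_normal).conj_mem _ hmem _

/-- The main fragmentation case. -/
lemma main_case (hss : SelfSimilarPair F) (hPc : IsClopen P) (hC0 : C.H 0 = Pᶜ)
    {g : Equiv.Perm E} (hg : g ∈ EndsHomeo F)
    {w : E} (hw : w ∈ MaxSet F) (hwP : w ∉ P) (hgw : g w ≠ w)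
    {y : E} (hy : y ∈ MaxSet F) (hyP : y ∉ P) (hyw : y ≠ w) (hygw : y ≠ g w) :
    (⟨g, hg⟩ : ↥(EndsHomeo F)) ∈ Subgroup.normalClosure {tauEl C} := by
  set N := Subgroup.normalClosure {tauEl C} with hN
  -- clopen neighbourhood of g w avoiding w and y
  have hopen2 : IsOpen ({w, y} : Set E)ᶜ := ((Set.finite_singleton y).insert w).isClosed.isOpen_compl
  have hgwmem : g w ∈ ({w, y} : Set E)ᶜ := by
    intro hmem
    rcases hmem with h | h
    · exact hgw h
    · exact hygw (by rw [h])
  obtain ⟨W₂, hW₂c, hgwW₂, hW₂sub⟩ := clopen_nbhd_of_open hopen2 hgwmem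
  -- clopen neighbourhood of w
  have hopen1 : IsOpen (Pᶜ ∩ W₂ᶜ ∩ {y}ᶜ) :=
    (hPc.compl.isOpen.inter hW₂c.compl.isOpen).inter isOpen_compl_singleton
  have hwmem1 : w ∈ Pᶜ ∩ W₂ᶜ ∩ {y}ᶜ := by
    refine ⟨⟨hwP, fun hmem => ?_⟩, fun hmem => hyw (by simpa using hmem.symm)⟩
    exact (hW₂sub hmem) (Or.inl rfl)
  obtain ⟨W₁, hW₁c, hwW₁, hW₁sub⟩ := clopen_nbhd_of_open hopen1 hwmem1
  set U := W₁ ∩ ⇑g ⁻¹' W₂ with hU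
  have hUc : IsClopen U := hW₁c.inter (hW₂c.preimage hg.1)
  have hwU : w ∈ U := ⟨hwW₁, hgwW₂⟩
  -- copy of P inside U
  obtain ⟨R, hRc, hRU, ⟨pR⟩⟩ := stable_copy (maximal_stable hss hw) hUc hwU P hPc
  have hRW₁ : R ⊆ W₁ := hRU.trans inter_subset_left
  have hdisjPR : Disjoint P R := by
    rw [Set.disjoint_right]
    intro z hz hzP
    exact (hW₁sub (hRW₁ hz)).1.1 hzP
  set h' := swapPerm pR hdisjPR with hh'def
  have hh' : h' ∈ EndsHomeo F := swapPerm_mem pR hdisjPR hPc hRc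
  -- the image g '' R
  set gR := ⇑g '' R with hgRdef
  have hgRc : IsClopen gR := by
    rw [hgRdef, Equiv.image_eq_preimage_symm]
    exact hRc.preimage hg.2.1
  have hgRW₂ : gR ⊆ W₂ := by
    rintro _ ⟨r, hr, rfl⟩
    exact (hRU hr).2
  have hdisjRgR : Disjoint R gR := by
    rw [Set.disjoint_left]
    intro z hz hz'
    exact (hW₁sub (hRW₁ hz)).1.2 (hgRW₂ hz')
  set pa : PPH F R gR :=
    ⟨⇑g, ⇑g.symm, fun x hx => mem_image_of_mem _ hx,
      fun x hx => by obtain ⟨r, hr, rfl⟩ := hx; rwa [Equiv.symm_apply_apply],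
      fun x _ => g.symm_apply_apply x, fun x _ => g.apply_symm_apply x,
      hg.1.continuousOn, hg.2.1.continuousOn, fun x _ => hg.2.2 x⟩ with hpa
  set a := swapPerm pa hdisjRgR with hadef
  have ha : a ∈ EndsHomeo F := swapPerm_mem pa hdisjRgR hRc hgRc
  -- region for the second copy
  have hopenY : IsOpen (P ∪ W₁ ∪ W₂)ᶜ := ((hPc.union hW₁c).union hW₂c).compl.isOpen
  have hymem : y ∈ (P ∪ W₁ ∪ W₂)ᶜ := by
    intro hmem
    rcases hmem with (h | h) | h
    · exact hyP h
    · exact (hW₁sub h).2 rfl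
    · exact (hW₂sub h) (Or.inr rfl)
  obtain ⟨Y', hY'c, hyY', hY'sub⟩ := clopen_nbhd_of_open hopenY hymem
  obtain ⟨R', hR'c, hR'Y, ⟨pR'⟩⟩ := stable_copy (maximal_stable hss hy) hY'c hyY' P hPc
  have hdisjPR' : Disjoint P R' := by
    rw [Set.disjoint_right]
    intro z hz hzP
    exact (hY'sub (hR'Y hz)) (Or.inl (Or.inl hzP))
  set h'' := swapPerm pR' hdisjPR' with hh''def
  have hh'' : h'' ∈ EndsHomeo F := swapPerm_mem pR' hdisjPR' hPc hR'c
  -- a fixes R' pointwise, hence a ∈ N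
  have haN : (⟨a, ha⟩ : ↥(EndsHomeo F)) ∈ N := by
    apply memN_b C hC0 ha hh''
    intro x hx
    rw [swapPerm_image pR' hdisjPR'] at hx
    apply swapPerm_apply_off pa hdisjRgR
    · intro hmem
      exact (hY'sub (hR'Y hx)) (Or.inl (Or.inr (hRW₁ hmem)))
    · intro hmem
      exact (hY'sub (hR'Y hx)) (Or.inr (hgRW₂ hmem))
  -- b := a⁻¹ * g fixes R pointwise, hence b ∈ N
  have hb : a⁻¹ * g ∈ EndsHomeo F := mul_mem (inv_mem ha) hg
  have hbN : (⟨a⁻¹ * g, hb⟩ : ↥(EndsHomeo F)) ∈ N := by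
    apply memN_b C hC0 hb hh'
    intro x hx
    rw [swapPerm_image pR hdisjPR] at hx
    show a⁻¹ (g x) = x
    rw [show a⁻¹ = a from swapPerm_inv pa hdisjRgR]
    have hgx : g x ∈ gR := mem_image_of_mem _ hx
    rw [swapPerm_apply_right pa hdisjRgR hgx]
    exact g.symm_apply_apply x
  have heq : (⟨g, hg⟩ : ↥(EndsHomeo F)) = ⟨a, ha⟩ * ⟨a⁻¹ * g, hb⟩ := by
    apply Subtype.ext
    show g = a * (a⁻¹ * g)
    group
  rw [heq]
  exact mul_mem haN hbN

/-- Full fragmentation: every element lies in the normal closure of `τ`. -/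
lemma frag_all (hss : SelfSimilarPair F) {x₀ : E} (hclass : MaxSet F = {y | EndsEquiv F x₀ y})
    (xs : Fin 6 → E) (hxsM : ∀ i, xs i ∈ MaxSet F) (hxsInj : Function.Injective xs)
    (Q : Fin 6 → Set E) (hQc : ∀ i, IsClopen (Q i)) (hQmem : ∀ i, xs i ∈ Q i)
    (hQdis : ∀ i j, i ≠ j → Disjoint (Q i) (Q j))
    (hC0 : C.H 0 = (Q 0 ∪ Q 1)ᶜ)
    {g : Equiv.Perm E} (hg : g ∈ EndsHomeo F) :
    (⟨g, hg⟩ : ↥(EndsHomeo F)) ∈ Subgroup.normalClosure {tauEl C} := by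
  set P := Q 0 ∪ Q 1 with hPdef
  have hPc : IsClopen P := (hQc 0).union (hQc 1)
  have hC0' : C.H 0 = Pᶜ := hC0
  have hxsP : ∀ i : Fin 6, i ≠ 0 → i ≠ 1 → xs i ∉ P := by
    intro i h0 h1 hmem
    rcases hmem with h | h
    · exact Set.disjoint_left.mp (hQdis i 0 h0) (hQmem i) h
    · exact Set.disjoint_left.mp (hQdis i 1 h1) (hQmem i) h
  by_cases hcase : ∃ w, w ∈ MaxSet F ∧ w ∉ P ∧ g w ≠ w
  · obtain ⟨w, hw, hwP, hgw⟩ := hcase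
    have hy : ∃ y, y ∈ MaxSet F ∧ y ∉ P ∧ y ≠ w ∧ y ≠ g w := by
      by_cases c2 : xs 2 ≠ w ∧ xs 2 ≠ g w
      · exact ⟨xs 2, hxsM 2, hxsP 2 (by decide) (by decide), c2.1, c2.2⟩
      · by_cases c3 : xs 3 ≠ w ∧ xs 3 ≠ g w
        · exact ⟨xs 3, hxsM 3, hxsP 3 (by decide) (by decide), c3.1, c3.2⟩
        · push_neg at c2 c3
          have h23 : xs 2 ≠ xs 3 := fun h => (by decide : (2 : Fin 6) ≠ 3) (hxsInj h)
          have h24 : xs 2 ≠ xs 4 := fun h => (by decide : (2 : Fin 6) ≠ 4) (hxsInj h)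
          have h34 : xs 3 ≠ xs 4 := fun h => (by decide : (3 : Fin 6) ≠ 4) (hxsInj h)
          refine ⟨xs 4, hxsM 4, hxsP 4 (by decide) (by decide), ?_, ?_⟩
          · intro h4
            have hxs2 : xs 2 = g w := c2 (fun h => h24 (h.trans h4.symm))
            have hxs3 : xs 3 = g w := c3 (fun h => h34 (h.trans h4.symm))
            exact h23 (hxs2.trans hxs3.symm)
          · intro h4
            have hxs2 : xs 2 = w := by
              by_contra hne
              exact h24 ((c2 hne).trans h4.symm)
            have hxs3 : xs 3 = w := by
              by_contra hne
              exact h34 ((c3 hne).trans h4.symm)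
            exact h23 (hxs2.trans hxs3.symm)
    obtain ⟨y, hy1, hy2, hy3, hy4⟩ := hy
    exact main_case C hss hPc hC0' hg hw hwP hgw hy1 hy2 hy3 hy4
  · push_neg at hcase
    -- build the auxiliary swap σ moving the maximal end xs 2 into Q 3
    have h2cl : EndsEquiv F x₀ (xs 2) := by
      have := hxsM 2
      rwa [hclass] at this
    have h3cl : EndsEquiv F x₀ (xs 3) := by
      have := hxsM 3
      rwa [hclass] at this
    have hle : EndsLE F (xs 2) (xs 3) := endsLE_trans h2cl.2 h3cl.1
    obtain ⟨D, hDQ3, hDc, V, hVc, hxs2V, hpair⟩ := hle (Q 3) (hQc 3) (hQmem 3)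
    set p := pphOfPairHomeo hpair with hpdef
    have hV'c : IsClopen (V ∩ Q 2) := hVc.inter (hQc 2)
    obtain ⟨hD'c, hD'D, ⟨p'⟩⟩ := pph_restrict p hVc hDc hV'c inter_subset_left
    have hdisj' : Disjoint (V ∩ Q 2) (p.f '' (V ∩ Q 2)) := by
      rw [Set.disjoint_left]
      intro z hz hz'
      exact Set.disjoint_left.mp (hQdis 2 3 (by decide)) hz.2 (hDQ3 (hD'D hz'))
    set σp := swapPerm p' hdisj' with hσdef
    have hσ : σp ∈ EndsHomeo F := swapPerm_mem p' hdisj' hV'c hD'c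
    have hσN : (⟨σp, hσ⟩ : ↥(EndsHomeo F)) ∈ Subgroup.normalClosure {tauEl C} := by
      apply memN_a C hC0' hσ
      intro x hx
      apply swapPerm_apply_off p' hdisj'
      · intro hmem
        rcases hx with h | h
        · exact Set.disjoint_left.mp (hQdis 2 0 (by decide)) hmem.2 h
        · exact Set.disjoint_left.mp (hQdis 2 1 (by decide)) hmem.2 h
      · intro hmem
        have hxQ3 : x ∈ Q 3 := hDQ3 (hD'D hmem)
        rcases hx with h | h
        · exact Set.disjoint_left.mp (hQdis 3 0 (by decide)) hxQ3 h
        · exact Set.disjoint_left.mp (hQdis 3 1 (by decide)) hxQ3 h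
    have hxs2V' : xs 2 ∈ V ∩ Q 2 := ⟨hxs2V, hQmem 2⟩
    set z := p'.f (xs 2) with hzdef
    have hzD' : z ∈ p.f '' (V ∩ Q 2) := p'.mapsTo hxs2V'
    have hzmax : z ∈ MaxSet F := pph_max p' hV'c hD'c hclass hxs2V' (hxsM 2)
    have hzQ3 : z ∈ Q 3 := hDQ3 (hD'D hzD')
    have hzP : z ∉ P := by
      intro hmem
      rcases hmem with h | h
      · exact Set.disjoint_left.mp (hQdis 3 0 (by decide)) hzQ3 h
      · exact Set.disjoint_left.mp (hQdis 3 1 (by decide)) hzQ3 h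
    have hz2 : z ≠ xs 2 := by
      intro h
      exact Set.disjoint_left.mp (hQdis 3 2 (by decide)) hzQ3 (h ▸ hQmem 2)
    have hg' : g * σp ∈ EndsHomeo F := mul_mem hg hσ
    have happ : (g * σp) (xs 2) = z := by
      show g (σp (xs 2)) = z
      rw [hσdef, swapPerm_apply_left p' hdisj' hxs2V']
      exact hcase z hzmax hzP
    have hne2 : (g * σp) (xs 2) ≠ xs 2 := by
      rw [happ]; exact hz2
    have h4z : xs 4 ≠ z := by
      intro h
      exact Set.disjoint_left.mp (hQdis 4 3 (by decide)) (hQmem 4) (h ▸ hzQ3)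
    have h42 : xs 4 ≠ xs 2 := fun h => (by decide : (4 : Fin 6) ≠ 2) (hxsInj h)
    have hmem' := main_case C hss hPc hC0' hg' (hxsM 2)
      (hxsP 2 (by decide) (by decide)) hne2 (hxsM 4) (hxsP 4 (by decide) (by decide))
      h42 (by rw [happ]; exact h4z)
    have heq : (⟨g, hg⟩ : ↥(EndsHomeo F)) = ⟨g * σp, hg'⟩ * (⟨σp, hσ⟩ : ↥(EndsHomeo F))⁻¹ := by
      apply Subtype.ext
      show g = g * σp * σp⁻¹
      group
    rw [heq]
    exact mul_mem hmem' (inv_mem hσN)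

end Frag

end EndsPf

open EndsPf

variable {E : Type*} [TopologicalSpace E] [Nonempty E] [CompactSpace E]
  [TopologicalSpace.MetrizableSpace E] [TotallyDisconnectedSpace E]

theorem endsHomeo_normally_generated_by_involution
    (F : Set E) (hF : IsClosed F) (huss : UniformlySelfSimilar F) :
    ∃ τ : ↥(EndsHomeo F), τ ^ 2 = 1 ∧ τ ≠ 1 ∧
      Subgroup.normalClosure ({τ} : Set ↥(EndsHomeo F)) = ⊤ := by
  obtain ⟨hss, ⟨x₀, hclass⟩, ⟨e⟩⟩ := huss
  obtain ⟨xs, hxsM, hxsInj⟩ := maxset_six e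
  obtain ⟨Q, hQc, hQmem, hQdis⟩ := disjoint_clopen_nbhds xs hxsInj
  obtain ⟨C, hC0⟩ := chain_construct hss e (hxsM 0) (hxsM 1) (hQc 0) (hQc 1) (hQmem 0)
    (hQmem 1) (hQdis 0 1 (by decide))
  refine ⟨tauEl C, ?_, ?_, ?_⟩
  · have hsq : (tauEl C) ^ 2 = tauEl C * tauEl C := sq (tauEl C)
    rw [hsq]
    exact Subtype.ext (tau_sq C)
  · intro h
    have hne : (C.H 0).Nonempty := by
      rw [hC0]
      refine ⟨xs 2, ?_⟩
      intro hmem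
      rcases hmem with hmem | hmem
      · exact Set.disjoint_left.mp (hQdis 2 0 (by decide)) (hQmem 2) hmem
      · exact Set.disjoint_left.mp (hQdis 2 1 (by decide)) (hQmem 2) hmem
    exact tau_ne_one C hne (congrArg Subtype.val h)
  · rw [Subgroup.eq_top_iff']
    rintro ⟨gp, hgp⟩
    exact frag_all C hss hclass xs hxsM hxsInj Q hQc hQmem hQdis hC0 hgp
end

section
/- Let (E,F) be a uniformly self-similar ends space and let H be a half-space of (E,F). Then there exist two disjoint half-spaces H₁, H₂ of (E,F) with H₁ ⊆ H and H₂ ⊆ H. -/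
variable {E : Type*} [TopologicalSpace E] [Nonempty E] [CompactSpace E]
  [TopologicalSpace.MetrizableSpace E] [TotallyDisconnectedSpace E]


lemma cantor_not_isolated (f : ℕ → Bool) (U : Set (ℕ → Bool)) (hU : IsOpen U) (hf : f ∈ U) :
    ∃ g ∈ U, g ≠ f := by
  set g : ℕ → ℕ → Bool := fun n => Function.update f n (!(f n)) with hg
  have htend : Filter.Tendsto g Filter.atTop (nhds f) := by
    rw [tendsto_pi_nhds]
    intro k
    have hc : ∀ n ≥ k + 1, g n k = f k := by
      intro n hn
      simp [hg, Function.update_of_ne (by omega : k ≠ n)]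
    refine Filter.Tendsto.congr' ?_ tendsto_const_nhds
    filter_upwards [Filter.eventually_ge_atTop (k+1)] with n hn using (hc n hn).symm
  obtain ⟨n, hn⟩ := (htend.eventually (hU.mem_nhds hf)).exists
  refine ⟨g n, hn, fun h => ?_⟩
  have := congrFun h n
  simp [hg] at this

theorem halfspace_contains_two_disjoint_halfspaces
    (F : Set E) (hF : IsClosed F) (huss : UniformlySelfSimilar F)
    (H : Set E) (hH : IsHalfSpace F H) :
    ∃ H₁ H₂ : Set E, IsHalfSpace F H₁ ∧ IsHalfSpace F H₂ ∧
      Disjoint H₁ H₂ ∧ H₁ ⊆ H ∧ H₂ ⊆ H := by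
  obtain ⟨hHclopen, ⟨x, hxH, hxM⟩, hproper⟩ := hH
  obtain ⟨_, _, ⟨e⟩⟩ := huss
  -- find a second point y ≠ x in H ∩ MaxSet F
  set S : Set ↥(MaxSet F) := Subtype.val ⁻¹' H with hS
  have hSopen : IsOpen S := hHclopen.isOpen.preimage continuous_subtype_val
  have hxS : (⟨x, hxM⟩ : ↥(MaxSet F)) ∈ S := hxH
  have heS : IsOpen (e '' S) := e.isOpenMap S hSopen
  obtain ⟨g, hgS, hgne⟩ := cantor_not_isolated (e ⟨x, hxM⟩) (e '' S) heS ⟨_, hxS, rfl⟩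
  set y : ↥(MaxSet F) := e.symm g with hy
  have hyS : y ∈ S := by
    obtain ⟨z, hz, hzg⟩ := hgS
    simpa [hy, ← hzg] using hz
  have hyne : y ≠ ⟨x, hxM⟩ := by
    intro h
    apply hgne
    have := congrArg e h
    simpa [hy] using this
  have hne : (y : E) ≠ x := fun h => hyne (Subtype.ext h)
  -- separate x and y by a clopen set
  have : TotallySeparatedSpace E := loc_compact_t2_tot_disc_iff_tot_sep.mp inferInstance
  obtain ⟨U, hU, hxU, hyU⟩ := exists_isClopen_of_totally_separated hne.symm
  refine ⟨H ∩ U, H ∩ Uᶜ, ?_, ?_, ?_, Set.inter_subset_left, Set.inter_subset_left⟩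
  · refine ⟨hHclopen.inter hU, ⟨x, ⟨⟨hxH, hxU⟩, hxM⟩⟩, ?_⟩
    rw [Set.ssubset_iff_of_subset (by intro z hz; exact hz.2)]
    exact ⟨y, y.2, fun hc => hyU hc.1.2⟩
  · refine ⟨hHclopen.inter hU.compl, ⟨y, ⟨⟨hyS, hyU⟩, y.2⟩⟩, ?_⟩
    rw [Set.ssubset_iff_of_subset (by intro z hz; exact hz.2)]
    exact ⟨x, hxM, fun hc => hc.1.2 hxU⟩
  · exact Set.disjoint_left.mpr fun z hz hz' => hz'.2 hz.2
end
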